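/- arXiv:2506.17634 — 5 statements merged into one kernel-verified Lean document; each statement's English description precedes it below -/
import Mathlib

section
/- Let X_1, …, X_n be independent integrable real random variables and S, R > 0 constants such that E[X_i^k] ≤ k!·S²·R^{k−2}/2 for every i ∈ {1,…,n} and every integer k ≥ 2, and assume E[exp(λX_i)] < ∞ for every 0 < λ < 1/R. Then for every t ≥ 0, P[Σ_{i=1}^n (X_i − E[X_i]) ≥ t] ≤ exp(−t² / (2(n·S² + R·t))). -/
open MeasureTheory ProbabilityTheory

private lemma real_exp_eq_tsum (y : ℝ) :
    Real.exp y = ∑' n : ℕ, y ^ n / n.factorial := by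
  rw [Real.exp_eq_exp_ℝ, NormedSpace.exp_eq_tsum_div]

/-- pointwise AM-GM bound for odd absolute powers -/
private lemma abs_pow_odd_le (x : ℝ) (j : ℕ) :
    |x| ^ (2 * j + 1) ≤ (x ^ (2 * j) + x ^ (2 * j + 2)) / 2 := by
  have h1 : |x| ^ (2 * j + 1) = |x| ^ j * |x| ^ (j + 1) := by
    rw [← pow_add]; ring_nf
  have h2 : x ^ (2 * j) = (|x| ^ j) ^ 2 := by
    rw [← pow_mul, Even.pow_abs ⟨j, by ring⟩]; ring_nf
  have h3 : x ^ (2 * j + 2) = (|x| ^ (j + 1)) ^ 2 := by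
    rw [← pow_mul, Even.pow_abs ⟨j + 1, by ring⟩]; ring_nf
  nlinarith [sq_nonneg (|x| ^ j - |x| ^ (j + 1))]

set_option maxHeartbeats 1600000 in
private lemma mgf_le_aux {Ω : Type*} [MeasurableSpace Ω] (μ : Measure Ω)
    [IsProbabilityMeasure μ]
    (X : Ω → ℝ) (S R : ℝ) (hS : 0 < S) (hR : 0 < R) (hXmeas : Measurable X)
    (hint : Integrable X μ)
    (hpowint : ∀ k, 2 ≤ k → Integrable (fun ω => X ω ^ k) μ)
    (hmom : ∀ k, 2 ≤ k → ∫ ω, X ω ^ k ∂μ ≤ (k.factorial : ℝ) * S ^ 2 * R ^ (k - 2) / 2)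
    {l : ℝ} (hl : 0 < l) (hlR : l * R < 1) :
    ∫ ω, Real.exp (l * X ω) ∂μ
      ≤ Real.exp (l * (∫ ω, X ω ∂μ) + l ^ 2 * S ^ 2 / (2 * (1 - l * R))) := by
  -- integrability of all powers
  have hXk : ∀ k, Integrable (fun ω => X ω ^ k) μ := by
    intro k
    match k with
    | 0 => simpa using (integrable_const (1 : ℝ))
    | 1 => simpa using hint
    | (k + 2) => exact hpowint _ (by omega)
  -- integrability of absolute powers
  have habs : ∀ k, Integrable (fun ω => |X ω| ^ k) μ := by
    intro k
    rcases Nat.even_or_odd k with hk | hk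
    · have : (fun ω => |X ω| ^ k) = fun ω => X ω ^ k := by
        funext ω; exact hk.pow_abs _
      rw [this]; exact hXk k
    · obtain ⟨j, rfl⟩ := hk
      refine Integrable.mono ((((hXk (2 * j)).add (hXk (2 * j + 2)))).div_const 2)
        ((hXmeas.abs.pow_const _).aestronglyMeasurable) ?_
      filter_upwards with ω
      have h1 := abs_pow_odd_le (X ω) j
      have h2 : (0 : ℝ) ≤ |X ω| ^ (2 * j + 1) := by positivity
      have h3 : (0 : ℝ) ≤ (X ω ^ (2 * j) + X ω ^ (2 * j + 2)) / 2 := by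
        have := Even.pow_nonneg (even_two_mul j) (X ω)
        have := Even.pow_nonneg (⟨j + 1, by omega⟩ : Even (2 * j + 2)) (X ω)
        linarith
      simp only [Pi.add_apply, Real.norm_eq_abs, abs_of_nonneg h2, abs_of_nonneg h3]
      exact h1
  -- bound on the absolute moments
  have hMb : ∀ j : ℕ, ∫ ω, |X ω| ^ (j + 2) ∂μ
      ≤ ((j + 3).factorial : ℝ) * S ^ 2 * (R ^ j + R ^ (j + 2)) / R := by
    intro j
    have hfact : ((j + 2).factorial : ℝ) ≤ ((j + 3).factorial : ℝ) := by
      exact_mod_cast Nat.factorial_le (by omega)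
    have hf3 : (0 : ℝ) < ((j + 3).factorial : ℝ) := by positivity
    rcases Nat.even_or_odd (j + 2) with hk | hk
    · have heq : (fun ω => |X ω| ^ (j + 2)) = fun ω => X ω ^ (j + 2) := by
        funext ω; exact hk.pow_abs _
      rw [heq]
      refine (hmom (j + 2) (by omega)).trans ?_
      have hj : (j + 2) - 2 = j := by omega
      rw [hj, div_le_div_iff₀ (by norm_num) hR]
      have hexp : R ^ (j + 2) = R ^ j * R ^ 2 := by ring
      rw [hexp]
      have key : R ≤ 2 + 2 * R ^ 2 := by nlinarith [sq_nonneg (2 * R - 1)]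
      nlinarith [mul_le_mul_of_nonneg_right hfact
          (by positivity : (0:ℝ) ≤ S ^ 2 * R ^ j * R),
        mul_le_mul_of_nonneg_left key
          (by positivity : (0:ℝ) ≤ ((j + 3).factorial : ℝ) * S ^ 2 * R ^ j)]
    · obtain ⟨i, hi⟩ := hk
      have hi1 : 1 ≤ i := by omega
      have hle : ∫ ω, |X ω| ^ (j + 2) ∂μ
          ≤ ((∫ ω, X ω ^ (2 * i) ∂μ) + ∫ ω, X ω ^ (2 * i + 2) ∂μ) / 2 := by
        rw [hi]
        have hmono := integral_mono (habs (2 * i + 1))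
          (((hXk (2 * i)).add (hXk (2 * i + 2))).div_const 2)
          (fun ω => abs_pow_odd_le (X ω) i)
        calc ∫ ω, |X ω| ^ (2 * i + 1) ∂μ
            ≤ ∫ ω, (X ω ^ (2 * i) + X ω ^ (2 * i + 2)) / 2 ∂μ := hmono
          _ = ((∫ ω, X ω ^ (2 * i) ∂μ) + ∫ ω, X ω ^ (2 * i + 2) ∂μ) / 2 := by
              rw [integral_div, integral_add (hXk (2 * i)) (hXk (2 * i + 2))]
      refine hle.trans ?_
      have h1 := hmom (2 * i) (by omega)
      have h2 := hmom (2 * i + 2) (by omega)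
      have he1 : 2 * i - 2 = 2 * (i - 1) := by omega
      have he2 : 2 * i + 2 - 2 = 2 * i := by omega
      rw [he1] at h1; rw [he2] at h2
      have hfle2 : ((2 * i + 2).factorial : ℝ) = ((j + 3).factorial : ℝ) := by
        congr 2; omega
      have hfle1 : ((2 * i).factorial : ℝ) ≤ ((j + 3).factorial : ℝ) := by
        rw [← hfle2]; exact_mod_cast Nat.factorial_le (by omega)
      have hpow1 : R ^ (2 * (i - 1)) * R = R ^ j := by
        rw [← pow_succ]; congr 1; omega
      have hpow2 : R ^ (2 * i) * R = R ^ (j + 2) := by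
        rw [← pow_succ]; congr 1; omega
      rw [div_le_div_iff₀ (by norm_num) hR]
      have e1 : ((2 * i).factorial : ℝ) * S ^ 2 * R ^ (2 * (i - 1)) / 2 * R
          ≤ ((j + 3).factorial : ℝ) * S ^ 2 * R ^ j := by
        have heq : ((2 * i).factorial : ℝ) * S ^ 2 * R ^ (2 * (i - 1)) / 2 * R
            = ((2 * i).factorial : ℝ) * S ^ 2 * (R ^ (2 * (i - 1)) * R) / 2 := by ring
        rw [heq, hpow1]
        nlinarith [mul_le_mul_of_nonneg_right hfle1
          (by positivity : (0:ℝ) ≤ S ^ 2 * R ^ j),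
          mul_nonneg (mul_nonneg hf3.le (sq_nonneg S)) (pow_pos hR j).le]
      have e2 : ((2 * i + 2).factorial : ℝ) * S ^ 2 * R ^ (2 * i) / 2 * R
          ≤ ((j + 3).factorial : ℝ) * S ^ 2 * R ^ (j + 2) := by
        have heq : ((2 * i + 2).factorial : ℝ) * S ^ 2 * R ^ (2 * i) / 2 * R
            = ((2 * i + 2).factorial : ℝ) * S ^ 2 * (R ^ (2 * i) * R) / 2 := by ring
        rw [heq, hpow2, hfle2]
        nlinarith [mul_nonneg (mul_nonneg hf3.le (sq_nonneg S))
          (pow_pos hR (j + 2)).le]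
      nlinarith [mul_le_mul_of_nonneg_right h1 hR.le,
        mul_le_mul_of_nonneg_right h2 hR.le, e1, e2,
        mul_nonneg (mul_nonneg hf3.le (sq_nonneg S))
          (by positivity : (0:ℝ) ≤ R ^ j + R ^ (j + 2))]
  -- series expansion of the mgf
  set m := ∫ ω, X ω ∂μ with hm
  set q := l * R with hq
  have hq0 : (0:ℝ) ≤ q := by positivity
  have hq1 : q < 1 := hlR
  have h1q : (0:ℝ) < 1 - q := by linarith
  have hRne : R ≠ 0 := hR.ne'
  set F : ℕ → Ω → ℝ := fun k ω => (l * X ω) ^ k / k.factorial with hF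
  have hFeq : ∀ k, F k = fun ω => (l ^ k / k.factorial) * X ω ^ k := by
    intro k; funext ω; simp only [hF, mul_pow]; ring
  have hFint : ∀ k, Integrable (F k) μ := by
    intro k; rw [hFeq k]; exact (hXk k).const_mul _
  have hnormint : ∀ k, ∫ ω, ‖F k ω‖ ∂μ = l ^ k / k.factorial * ∫ ω, |X ω| ^ k ∂μ := by
    intro k
    rw [← integral_const_mul]
    congr 1; funext ω
    simp only [hF]
    rw [norm_div, norm_pow, Real.norm_eq_abs, Real.norm_eq_abs, abs_mul,
      abs_of_nonneg hl.le, Nat.abs_cast, mul_pow]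
    ring
  have hIeq : ∀ k, ∫ ω, F k ω ∂μ = l ^ k / k.factorial * ∫ ω, X ω ^ k ∂μ := by
    intro k; rw [hFeq k, integral_const_mul]
  have hfacne : ∀ k : ℕ, ((k.factorial : ℝ)) ≠ 0 := by
    intro k; positivity
  -- summability of the norms
  have hsummaux : Summable (fun j : ℕ => ((j:ℝ) + 3) * q ^ j) := by
    have h1 : Summable (fun j : ℕ => (j:ℝ) * q ^ j) := by
      have := summable_pow_mul_geometric_of_norm_lt_one 1 (by
        rwa [Real.norm_eq_abs, abs_of_nonneg hq0] : ‖q‖ < 1)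
      simpa using this
    have h2 : Summable (fun j : ℕ => (3:ℝ) * q ^ j) :=
      (summable_geometric_of_lt_one hq0 hq1).mul_left 3
    have := h1.add h2
    refine this.congr fun j => by ring
  have hsumnorm : Summable (fun k => ∫ ω, ‖F k ω‖ ∂μ) := by
    rw [← summable_nat_add_iff 2]
    refine Summable.of_nonneg_of_le
      (fun j => integral_nonneg fun ω => norm_nonneg _)
      (fun j => ?_) (hsummaux.mul_left (S ^ 2 * l ^ 2 * (1 + R ^ 2) / R))
    have hfs : ((j + 3).factorial : ℝ) = ((j:ℝ) + 3) * (j + 2).factorial := by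
      have : (j + 3).factorial = (j + 3) * (j + 2).factorial := Nat.factorial_succ (j + 2)
      rw [this]; push_cast; ring
    calc ∫ ω, ‖F (j + 2) ω‖ ∂μ
        = l ^ (j + 2) / (j + 2).factorial * ∫ ω, |X ω| ^ (j + 2) ∂μ := hnormint (j + 2)
      _ ≤ l ^ (j + 2) / (j + 2).factorial
            * (((j + 3).factorial : ℝ) * S ^ 2 * (R ^ j + R ^ (j + 2)) / R) :=
          mul_le_mul_of_nonneg_left (hMb j) (by positivity)
      _ = S ^ 2 * l ^ 2 * (1 + R ^ 2) / R * (((j:ℝ) + 3) * q ^ j) := by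
          rw [hfs, hq]
          field_simp [hfacne (j + 2)]
          ring
  -- term-by-term integration
  have hsumI : Summable (fun k => ∫ ω, F k ω ∂μ) :=
    Summable.of_norm_bounded hsumnorm fun k => norm_integral_le_integral_norm _
  have hseries : ∑' k, ∫ ω, F k ω ∂μ = ∫ ω, Real.exp (l * X ω) ∂μ := by
    rw [integral_tsum_of_summable_integral_norm hFint hsumnorm]
    refine integral_congr_ae (Filter.Eventually.of_forall fun ω => ?_)
    exact (real_exp_eq_tsum (l * X ω)).symm
  -- tail estimate
  have hsumtail : Summable (fun j => ∫ ω, F (j + 2) ω ∂μ) :=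
    (summable_nat_add_iff 2).mpr hsumI
  have htail : ∑' j : ℕ, ∫ ω, F (j + 2) ω ∂μ ≤ l ^ 2 * S ^ 2 / (2 * (1 - q)) := by
    have hb : ∀ j : ℕ, ∫ ω, F (j + 2) ω ∂μ ≤ l ^ 2 * S ^ 2 / 2 * q ^ j := by
      intro j
      have hmom' := hmom (j + 2) (by omega)
      have hsub : (j + 2) - 2 = j := by omega
      rw [hsub] at hmom'
      calc ∫ ω, F (j + 2) ω ∂μ
          = l ^ (j + 2) / (j + 2).factorial * ∫ ω, X ω ^ (j + 2) ∂μ := hIeq (j + 2)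
        _ ≤ l ^ (j + 2) / (j + 2).factorial
              * (((j + 2).factorial : ℝ) * S ^ 2 * R ^ j / 2) :=
            mul_le_mul_of_nonneg_left hmom' (by positivity)
        _ = l ^ 2 * S ^ 2 / 2 * q ^ j := by
            rw [hq]
            field_simp [hfacne (j + 2)]
            ring
    calc ∑' j : ℕ, ∫ ω, F (j + 2) ω ∂μ
        ≤ ∑' j : ℕ, l ^ 2 * S ^ 2 / 2 * q ^ j :=
          Summable.tsum_le_tsum hb hsumtail ((summable_geometric_of_lt_one hq0 hq1).mul_left _)
      _ = l ^ 2 * S ^ 2 / 2 * (1 - q)⁻¹ := by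
          rw [tsum_mul_left, tsum_geometric_of_lt_one hq0 hq1]
      _ = l ^ 2 * S ^ 2 / (2 * (1 - q)) := by
          field_simp
  -- put everything together
  have hsplit := Summable.sum_add_tsum_nat_add 2 hsumI
  have hI0 : ∫ ω, F 0 ω ∂μ = 1 := by
    rw [hIeq 0]; simp
  have hI1 : ∫ ω, F 1 ω ∂μ = l * m := by
    rw [hIeq 1]; simp [hm]
  have hfinal : ∫ ω, Real.exp (l * X ω) ∂μ
      ≤ 1 + l * m + l ^ 2 * S ^ 2 / (2 * (1 - q)) := by
    rw [← hseries, ← hsplit]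
    have hr2 : ∑ k ∈ Finset.range 2, ∫ ω, F k ω ∂μ = 1 + l * m := by
      rw [Finset.sum_range_succ, Finset.sum_range_one, hI0, hI1]
    rw [hr2]
    linarith [htail]
  refine hfinal.trans ?_
  have := Real.add_one_le_exp (l * m + l ^ 2 * S ^ 2 / (2 * (1 - q)))
  linarith


/-- **One-tailed Bernstein inequality** with the moment-growth condition imposed on the
non-centered variables: if `E[X_i^k] ≤ k! S² R^(k-2) / 2` for all `k ≥ 2`, and the moment
generating functions `E[exp(λ X_i)]` are finite for `0 < λ < 1/R`, then
`P[Σ (X_i - E X_i) ≥ t] ≤ exp(-t² / (2 (n S² + R t)))` for all `t ≥ 0`. -/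
theorem bernstein_one_tailed
    {Ω : Type*} [MeasurableSpace Ω] (μ : Measure Ω) [IsProbabilityMeasure μ]
    (n : ℕ) (X : Fin n → Ω → ℝ) (S R : ℝ) (hS : 0 < S) (hR : 0 < R)
    (hmeas : ∀ i, Measurable (X i))
    (hindep : iIndepFun X μ)
    (hint : ∀ i, Integrable (X i) μ)
    (hpowint : ∀ (i : Fin n) (k : ℕ), 2 ≤ k → Integrable (fun ω => X i ω ^ k) μ)
    (hmom : ∀ (i : Fin n) (k : ℕ), 2 ≤ k →
      ∫ ω, X i ω ^ k ∂μ ≤ (k.factorial : ℝ) * S ^ 2 * R ^ (k - 2) / 2)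
    (hmgf : ∀ (i : Fin n) (l : ℝ), 0 < l → l < 1 / R →
      Integrable (fun ω => Real.exp (l * X i ω)) μ)
    (t : ℝ) (ht : 0 ≤ t) :
    μ {ω | t ≤ ∑ i, (X i ω - ∫ ω', X i ω' ∂μ)}
      ≤ ENNReal.ofReal (Real.exp (-t ^ 2 / (2 * (n * S ^ 2 + R * t)))) := by
  rcases ht.eq_or_lt with h0 | h0
  · -- t = 0 : the bound is trivial
    rw [← h0]
    norm_num
    exact prob_le_one
  by_cases hn : n = 0
  · subst hn
    have hempty : {ω | t ≤ ∑ i : Fin 0, (X i ω - ∫ ω', X i ω' ∂μ)} = (∅ : Set Ω) := by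
      ext ω
      simp only [Set.mem_setOf_eq, Finset.univ_eq_empty, Finset.sum_empty,
        Set.mem_empty_iff_false, iff_false, not_le]
      exact h0
    rw [hempty]
    simp
  -- main case
  have hn1 : (1:ℝ) ≤ (n:ℝ) := by exact_mod_cast Nat.one_le_iff_ne_zero.mpr hn
  have hnS : (0:ℝ) < (n:ℝ) * S ^ 2 := by nlinarith [pow_pos hS 2]
  set D : ℝ := (n:ℝ) * S ^ 2 + R * t with hD
  have hDpos : 0 < D := by nlinarith [mul_pos hR h0]
  set l : ℝ := t / D with hldef
  have hlpos : 0 < l := div_pos h0 hDpos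
  have hlR : l * R < 1 := by
    rw [hldef, div_mul_eq_mul_div, div_lt_one hDpos, hD]
    nlinarith
  have hl1R : l < 1 / R := by rw [lt_div_iff₀ hR]; exact hlR
  have h1mlR : (0:ℝ) < 1 - l * R := by linarith
  set Y : Fin n → Ω → ℝ := fun i ω => X i ω - ∫ ω', X i ω' ∂μ with hY
  have hYmeas : ∀ i, Measurable (Y i) := fun i => (hmeas i).sub_const _
  have hYindep : iIndepFun Y μ :=
    hindep.comp (fun i x => x - ∫ ω', X i ω' ∂μ) (fun i => measurable_id.sub_const _)
  have hYexp : ∀ i, Integrable (fun ω => Real.exp (l * Y i ω)) μ := by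
    intro i
    have heq : (fun ω => Real.exp (l * Y i ω))
        = fun ω => Real.exp (l * X i ω) * Real.exp (-(l * ∫ ω', X i ω' ∂μ)) := by
      funext ω
      rw [← Real.exp_add]
      congr 1
      simp only [hY]
      ring
    rw [heq]
    exact (hmgf i l hlpos hl1R).mul_const _
  set g : ℝ := l ^ 2 * S ^ 2 / (2 * (1 - l * R)) with hg
  have hint_sum : Integrable (fun ω => Real.exp (l * (∑ i, Y i) ω)) μ :=
    hYindep.integrable_exp_mul_sum hYmeas (fun i _ => hYexp i)
  have hchern := measure_ge_le_exp_mul_mgf (X := ∑ i, Y i) (t := l) t hlpos.le hint_sum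
  have hmgfY : ∀ i, mgf (Y i) μ l ≤ Real.exp g := by
    intro i
    have h1 : mgf (Y i) μ l
        = Real.exp (-(l * ∫ ω', X i ω' ∂μ)) * ∫ ω, Real.exp (l * X i ω) ∂μ := by
      have heq : (fun ω => Real.exp (l * Y i ω))
          = fun ω => Real.exp (-(l * ∫ ω', X i ω' ∂μ)) * Real.exp (l * X i ω) := by
        funext ω
        rw [← Real.exp_add]
        congr 1
        simp only [hY]
        ring
      rw [mgf]
      rw [show (fun ω => Real.exp (l * Y i ω)) = _ from heq]
      exact integral_const_mul _ _
    rw [h1]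
    have h2 := mgf_le_aux μ (X i) S R hS hR (hmeas i) (hint i)
      (fun k hk => hpowint i k hk) (fun k hk => hmom i k hk) hlpos hlR
    calc Real.exp (-(l * ∫ ω', X i ω' ∂μ)) * ∫ ω, Real.exp (l * X i ω) ∂μ
        ≤ Real.exp (-(l * ∫ ω', X i ω' ∂μ))
            * Real.exp (l * (∫ ω', X i ω' ∂μ) + l ^ 2 * S ^ 2 / (2 * (1 - l * R))) :=
          mul_le_mul_of_nonneg_left h2 (Real.exp_nonneg _)
      _ = Real.exp g := by
          rw [← Real.exp_add, hg]
          congr 1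
          ring
  have hmgfsum : mgf (∑ i, Y i) μ l ≤ Real.exp ((n:ℝ) * g) := by
    rw [hYindep.mgf_sum hYmeas Finset.univ]
    calc ∏ i, mgf (Y i) μ l
        ≤ ∏ _i : Fin n, Real.exp g :=
          Finset.prod_le_prod (fun i _ => mgf_nonneg) (fun i _ => hmgfY i)
      _ = Real.exp ((n:ℝ) * g) := by
          rw [Finset.prod_const, Finset.card_univ, Fintype.card_fin, ← Real.exp_nat_mul]
  have harith : -l * t + (n:ℝ) * g = -t ^ 2 / (2 * D) := by
    have h1mq : 1 - l * R = (n:ℝ) * S ^ 2 / D := by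
      rw [hldef, hD]
      field_simp
      ring
    rw [hg, h1mq, hldef]
    rw [hD] at *
    field_simp
    ring
  have hfin : (μ {ω | t ≤ (∑ i, Y i) ω}).toReal ≤ Real.exp (-t ^ 2 / (2 * D)) := by
    calc (μ {ω | t ≤ (∑ i, Y i) ω}).toReal
        ≤ Real.exp (-l * t) * mgf (∑ i, Y i) μ l := hchern
      _ ≤ Real.exp (-l * t) * Real.exp ((n:ℝ) * g) :=
          mul_le_mul_of_nonneg_left hmgfsum (Real.exp_nonneg _)
      _ = Real.exp (-l * t + (n:ℝ) * g) := (Real.exp_add _ _).symm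
      _ = Real.exp (-t ^ 2 / (2 * D)) := by rw [harith]
  have hset : {ω | t ≤ ∑ i, (X i ω - ∫ ω', X i ω' ∂μ)} = {ω | t ≤ (∑ i, Y i) ω} := by
    ext ω
    simp only [Set.mem_setOf_eq, Finset.sum_apply, hY]
  rw [hset]
  calc μ {ω | t ≤ (∑ i, Y i) ω}
      = ENNReal.ofReal ((μ {ω | t ≤ (∑ i, Y i) ω}).toReal) :=
        (ENNReal.ofReal_toReal (measure_ne_top μ _)).symm
    _ ≤ ENNReal.ofReal (Real.exp (-t ^ 2 / (2 * D))) := ENNReal.ofReal_le_ofReal hfin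
end

section
/- Let α > 0 and let X be a real random variable such that E[|X|^{kα}] ≤ k!·S²·R^{k−2}/2 for every integer k ≥ 2, for some constants S, R > 0. Then for every t ≥ (2·max(S,R))^{1/α} one has E[exp((|X|/t)^α)] ≤ 2; in particular the α-exponential Orlicz norm satisfies ‖X‖_{Ψ_α} ≤ (2·max(S,R))^{1/α} ≤ 2·max(S,R)^{1/α} when α ≥ 1. -/
open MeasureTheory
open scoped ENNReal NNReal

noncomputable section

/-- The `α`-exponential Orlicz norm `‖X‖_{Ψ_α} = inf {t > 0 : E[exp((|X|/t)^α)] ≤ 2}`. -/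
def orliczNorm {Ω : Type*} [MeasurableSpace Ω] (μ : Measure Ω) (α : ℝ) (X : Ω → ℝ) : ℝ :=
  sInf {t : ℝ | 0 < t ∧ ∫⁻ ω, ENNReal.ofReal (Real.exp ((|X ω| / t) ^ α)) ∂μ ≤ 2}

section Aux

variable {Ω : Type*} [MeasurableSpace Ω] {μ : Measure Ω} [IsProbabilityMeasure μ]

/-- Cauchy–Schwarz step: if `∫ G² ≤ S²` then `∫ G ≤ S`, for `G ≥ 0`. -/
lemma lintegral_le_of_sq {G : Ω → ℝ} (hG : Measurable G) (hG0 : ∀ ω, 0 ≤ G ω)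
    {S : ℝ} (hS : 0 < S)
    (h2 : ∫⁻ ω, ENNReal.ofReal (G ω ^ (2 : ℝ)) ∂μ ≤ ENNReal.ofReal (S ^ 2)) :
    ∫⁻ ω, ENNReal.ofReal (G ω) ∂μ ≤ ENNReal.ofReal S := by
  have hconj : Real.HolderConjugate 2 2 := Real.HolderConjugate.two_two
  have hCS := ENNReal.lintegral_mul_le_Lp_mul_Lq μ hconj
    (f := fun ω => ENNReal.ofReal (G ω)) (g := fun _ => 1)
    (hG.ennreal_ofReal.aemeasurable) aemeasurable_const
  simp only [mul_one, Pi.mul_apply, Pi.one_apply, ENNReal.one_rpow,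
    lintegral_one, measure_univ] at hCS
  have hpow : ∀ ω, (ENNReal.ofReal (G ω)) ^ (2 : ℝ) = ENNReal.ofReal (G ω ^ (2 : ℝ)) :=
    fun ω => ENNReal.ofReal_rpow_of_nonneg (hG0 ω) (by norm_num)
  simp only [hpow] at hCS
  refine hCS.trans (le_trans (ENNReal.rpow_le_rpow h2 (by norm_num)) (le_of_eq ?_))
  rw [ENNReal.ofReal_rpow_of_nonneg (by positivity) (by norm_num)]
  congr 1
  rw [← Real.rpow_natCast S 2, ← Real.rpow_mul hS.le]
  norm_num

end Aux

/-- **Bernstein moment condition implies an Orlicz norm bound.** If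
`E[|X|^(kα)] ≤ k! S² R^(k-2) / 2` for all integers `k ≥ 2`, then for every
`t ≥ (2 max(S,R))^(1/α)` one has `E[exp((|X|/t)^α)] ≤ 2`; in particular
`‖X‖_{Ψ_α} ≤ (2 max(S,R))^(1/α)`, which is `≤ 2 max(S,R)^(1/α)` when `α ≥ 1`. -/
theorem bernstein_moment_to_orlicz
    {Ω : Type*} [MeasurableSpace Ω] (μ : Measure Ω) [IsProbabilityMeasure μ]
    (α S R : ℝ) (hα : 0 < α) (hS : 0 < S) (hR : 0 < R)
    (X : Ω → ℝ) (hXmeas : Measurable X)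
    (hmom : ∀ k : ℕ, 2 ≤ k →
      ∫⁻ ω, ENNReal.ofReal (|X ω| ^ ((k : ℝ) * α)) ∂μ
        ≤ ENNReal.ofReal ((k.factorial : ℝ) * S ^ 2 * R ^ (k - 2) / 2)) :
    (∀ t : ℝ, (2 * max S R) ^ (1 / α) ≤ t →
        ∫⁻ ω, ENNReal.ofReal (Real.exp ((|X ω| / t) ^ α)) ∂μ ≤ 2)
    ∧ orliczNorm μ α X ≤ (2 * max S R) ^ (1 / α)
    ∧ (1 ≤ α → (2 * max S R) ^ (1 / α) ≤ 2 * max S R ^ (1 / α)) := by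
  set M : ℝ := 2 * max S R with hMdef
  have hmax : 0 < max S R := lt_of_lt_of_le hS (le_max_left S R)
  have hM0 : 0 < M := by positivity
  have hSM : 2 * S ≤ M := by
    have := le_max_left S R; rw [hMdef]; linarith
  have hRM : 2 * R ≤ M := by
    have := le_max_right S R; rw [hMdef]; linarith
  set g : Ω → ℝ := fun ω => |X ω| ^ α with hgdef
  have hg0 : ∀ ω, 0 ≤ g ω := fun ω => Real.rpow_nonneg (abs_nonneg _) α
  have hgmeas : Measurable g := (Real.continuous_rpow_const hα.le).measurable.comp hXmeas.abs
  -- the `k`-th coefficient functions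
  set f : ℕ → Ω → ℝ≥0∞ :=
    fun k ω => ENNReal.ofReal ((g ω / M) ^ k / k.factorial) with hfdef
  have hfmeas : ∀ k, Measurable (f k) := fun k =>
    (((hgmeas.div_const M).pow_const k).div_const _).ennreal_ofReal
  have hhalf : (2⁻¹ : ℝ≥0∞) = ENNReal.ofReal (1/2) := by
    rw [ENNReal.ofReal_div_of_pos (by norm_num)]; norm_num
  -- moments rewritten in terms of `g`
  have hmomg : ∀ k : ℕ, 2 ≤ k →
      ∫⁻ ω, ENNReal.ofReal (g ω ^ k) ∂μ
        ≤ ENNReal.ofReal ((k.factorial : ℝ) * S ^ 2 * R ^ (k - 2) / 2) := by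
    intro k hk
    have heq : ∀ ω, g ω ^ k = |X ω| ^ ((k : ℝ) * α) := by
      intro ω
      rw [hgdef, mul_comm (k:ℝ) α, Real.rpow_mul (abs_nonneg _), Real.rpow_natCast]
    simp only [heq]
    exact hmom k hk
  -- Cauchy–Schwarz: `∫ g ≤ S`
  have hmean : ∫⁻ ω, ENNReal.ofReal (g ω) ∂μ ≤ ENNReal.ofReal S := by
    refine lintegral_le_of_sq hgmeas hg0 hS ?_
    have h2 := hmomg 2 le_rfl
    norm_num [Nat.factorial] at h2
    have hrw : ∀ ω, g ω ^ (2 : ℝ) = g ω ^ (2 : ℕ) := fun ω => Real.rpow_natCast _ 2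
    simp only [hrw]
    exact h2.trans (le_of_eq (by norm_num [mul_comm]))
  -- bound on each term of the series
  have hterm : ∀ k : ℕ, ∫⁻ ω, f k ω ∂μ ≤ (2⁻¹ : ℝ≥0∞) ^ k := by
    intro k
    match k with
    | 0 =>
      simp [hfdef, lintegral_const, measure_univ]
    | 1 =>
      have heq : ∀ ω, f 1 ω = ENNReal.ofReal (g ω) * ENNReal.ofReal M⁻¹ := by
        intro ω
        rw [hfdef]
        simp only [pow_one, Nat.factorial_one, Nat.cast_one, div_one]
        rw [div_eq_mul_inv, ENNReal.ofReal_mul (hg0 ω)]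
      simp only [heq]
      rw [lintegral_mul_const _ hgmeas.ennreal_ofReal]
      calc (∫⁻ ω, ENNReal.ofReal (g ω) ∂μ) * ENNReal.ofReal M⁻¹
          ≤ ENNReal.ofReal S * ENNReal.ofReal M⁻¹ := mul_le_mul_of_nonneg_right hmean zero_le'
        _ = ENNReal.ofReal (S * M⁻¹) := (ENNReal.ofReal_mul hS.le).symm
        _ ≤ (2⁻¹ : ℝ≥0∞) ^ 1 := by
            rw [pow_one, hhalf]
            apply ENNReal.ofReal_le_ofReal
            rw [← div_eq_mul_inv, div_le_div_iff₀ hM0 (by norm_num)]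
            linarith
    | (n + 2) =>
      set k := n + 2 with hk
      have heq : ∀ ω, f k ω
          = ENNReal.ofReal (g ω ^ k) * ENNReal.ofReal ((M ^ k * k.factorial)⁻¹) := by
        intro ω
        simp only [hfdef]
        rw [← ENNReal.ofReal_mul (by positivity)]
        congr 1
        rw [div_pow]
        field_simp
      simp only [heq]
      rw [lintegral_mul_const _ ((hgmeas.pow_const k).ennreal_ofReal)]
      calc (∫⁻ ω, ENNReal.ofReal (g ω ^ k) ∂μ) * ENNReal.ofReal ((M ^ k * k.factorial)⁻¹)
          ≤ ENNReal.ofReal ((k.factorial : ℝ) * S ^ 2 * R ^ (k - 2) / 2)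
              * ENNReal.ofReal ((M ^ k * k.factorial)⁻¹) :=
            mul_le_mul_of_nonneg_right (hmomg k (by omega)) zero_le'
        _ = ENNReal.ofReal ((k.factorial : ℝ) * S ^ 2 * R ^ (k - 2) / 2
              * (M ^ k * k.factorial)⁻¹) := (ENNReal.ofReal_mul (by positivity)).symm
        _ ≤ (2⁻¹ : ℝ≥0∞) ^ k := by
            rw [hhalf, ← ENNReal.ofReal_pow (by norm_num)]
            apply ENNReal.ofReal_le_ofReal
            have hfac : (0:ℝ) < (k.factorial : ℝ) := by positivity
            have hkey : (k.factorial : ℝ) * S ^ 2 * R ^ (k - 2) / 2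
                * (M ^ k * k.factorial)⁻¹ = S ^ 2 * R ^ n / (2 * M ^ k) := by
              have : k - 2 = n := by omega
              rw [this]
              field_simp
            rw [hkey]
            have hnum : S ^ 2 * R ^ n ≤ (M / 2) ^ 2 * (M / 2) ^ n := by
              have h1 : S ≤ M / 2 := by linarith
              have h2 : R ≤ M / 2 := by linarith
              gcongr
            calc S ^ 2 * R ^ n / (2 * M ^ k)
                ≤ (M / 2) ^ 2 * (M / 2) ^ n / (2 * M ^ k) := by gcongr
              _ = (1/2) ^ k / 2 := by
                  rw [← pow_add]
                  have : 2 + n = k := by omega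
                  rw [this, div_pow, div_pow]
                  rw [div_div, div_div]
                  rw [div_eq_div_iff (by positivity) (by positivity)]
                  ring
              _ ≤ (1/2) ^ k := by
                  have : (0:ℝ) < (1/2) ^ k := by positivity
                  linarith
  -- the main integral bound with `t^α` replaced by `M`
  have key : ∫⁻ ω, ENNReal.ofReal (Real.exp (g ω / M)) ∂μ ≤ 2 := by
    have hpt : ∀ ω, ENNReal.ofReal (Real.exp (g ω / M)) = ∑' k, f k ω := by
      intro ω
      rw [Real.exp_eq_exp_ℝ, NormedSpace.exp_eq_tsum_div]
      exact ENNReal.ofReal_tsum_of_nonneg (fun n => by positivity)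
        (Real.summable_pow_div_factorial _)
    simp_rw [hpt]
    rw [lintegral_tsum (fun k => (hfmeas k).aemeasurable)]
    calc ∑' k, ∫⁻ ω, f k ω ∂μ ≤ ∑' k : ℕ, (2⁻¹ : ℝ≥0∞) ^ k := ENNReal.tsum_le_tsum hterm
      _ = (1 - 2⁻¹)⁻¹ := ENNReal.tsum_geometric _
      _ = 2 := by
          rw [ENNReal.one_sub_inv_two, inv_inv]
  -- part 1
  have part1 : ∀ t : ℝ, (2 * max S R) ^ (1 / α) ≤ t →
      ∫⁻ ω, ENNReal.ofReal (Real.exp ((|X ω| / t) ^ α)) ∂μ ≤ 2 := by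
    intro t ht
    have hMα : 0 < M ^ (1/α) := Real.rpow_pos_of_pos hM0 _
    have ht0 : 0 < t := lt_of_lt_of_le hMα ht
    have htα : M ≤ t ^ α := by
      have := Real.rpow_le_rpow hMα.le ht hα.le
      rwa [← Real.rpow_mul hM0.le, one_div, inv_mul_cancel₀ hα.ne', Real.rpow_one] at this
    refine le_trans (lintegral_mono fun ω => ?_) key
    apply ENNReal.ofReal_le_ofReal
    apply Real.exp_le_exp.mpr
    rw [Real.div_rpow (abs_nonneg _) ht0.le]
    exact div_le_div_of_nonneg_left (hg0 ω) hM0 htα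
  refine ⟨part1, ?_, ?_⟩
  · -- Orlicz norm bound
    apply csInf_le
    · exact ⟨0, fun x hx => hx.1.le⟩
    · exact ⟨Real.rpow_pos_of_pos hM0 _, part1 _ le_rfl⟩
  · -- comparison with `2 max(S,R)^(1/α)`
    intro hα1
    rw [hMdef, Real.mul_rpow (by norm_num) hmax.le]
    have h2 : (2:ℝ) ^ (1/α) ≤ 2 := by
      nth_rewrite 2 [show (2:ℝ) = 2 ^ (1:ℝ) by rw [Real.rpow_one]]
      apply Real.rpow_le_rpow_of_exponent_le one_le_two
      rw [div_le_one hα]; exact hα1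
    have : (0:ℝ) ≤ max S R ^ (1/α) := (Real.rpow_pos_of_pos hmax _).le
    exact mul_le_mul_of_nonneg_right h2 this
end
end

section
/- Let W^{(1)}, …, W^{(m)} ∈ ℝ^{d×d̃} be arbitrary matrices with columns w_j^{(p)}, let κ̃_p(x, y) = (1/d̃)·Σ_{j=1}^{d̃} cos(⟨w_j^{(p)}, x − y⟩) be their RFF kernels, and let k̃_S^m(x, y) = Σ_{i ∈ Δ_m(L_x), j ∈ Δ_m(L_y)} Π_{p=1}^m δ_{i_p, j_p} κ̃_p(x_{i_p}, y_{j_p}) be the level-m Random Fourier Signature Feature (RFSF) kernel, which uses the independent kernel κ̃_p in the p-th factor. Then for all finite sequences x, y in ℝ^d, |k̃_S^m(x, y)| ≤ (Π_{p=1}^m ‖W^{(p)}‖_2² / (m!)²) · (‖x‖_{1-var}·‖y‖_{1-var} / d̃)^m, where ‖·‖_2 is the spectral norm. -/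
open MeasureTheory ProbabilityTheory

noncomputable section

/-- `ℝ^d` with the Euclidean norm. -/
abbrev Euc (d : ℕ) : Type := EuclideanSpace ℝ (Fin d)

/-- 1-variation `‖x‖_{1-var} = Σ_{i=1}^{L} ‖x_i - x_{i-1}‖₂` of the sequence `x_0, …, x_L`. -/
def oneVar {d : ℕ} (x : ℕ → Euc d) (L : ℕ) : ℝ :=
  ∑ i ∈ Finset.range L, ‖x (i + 1) - x i‖

/-- Second-order cross-differencing of a static kernel `g` along the sequences `x, y`:
the increment of `g` corresponding to the steps `x a → x (a+1)` and `y b → y (b+1)`. -/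
def dDelta {d : ℕ} (g : Euc d → Euc d → ℝ) (x y : ℕ → Euc d) (a b : ℕ) : ℝ :=
  g (x (a + 1)) (y (b + 1)) - g (x (a + 1)) (y b) - g (x a) (y (b + 1)) + g (x a) (y b)

open scoped Classical in
/-- Level-`m` (order-1 discretized) signature kernel of the sequences `x_0, …, x_Lx` and
`y_0, …, y_Ly`, with the (possibly different) static kernel `g p` in the `p`-th factor:
`Σ_{i ∈ Δ_m(Lx), j ∈ Δ_m(Ly)} Π_p δ_{i_p, j_p} (g p) (x_{i_p}, y_{j_p})`, where `Δ_m(n)` is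
the set of strictly increasing `m`-tuples of indices in `{1, …, n}`. -/
def sigKernelFam {d : ℕ} (m : ℕ) (g : Fin m → Euc d → Euc d → ℝ)
    (x y : ℕ → Euc d) (Lx Ly : ℕ) : ℝ :=
  ∑ i ∈ Finset.univ.filter (fun i : Fin m → Fin Lx => StrictMono i),
    ∑ j ∈ Finset.univ.filter (fun j : Fin m → Fin Ly => StrictMono j),
      ∏ p : Fin m, dDelta (g p) x y (i p) (j p)

/-- Level-`m` signature kernel built from a single static kernel `g`. -/
def sigKernel {d : ℕ} (g : Euc d → Euc d → ℝ) (m : ℕ)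
    (x y : ℕ → Euc d) (Lx Ly : ℕ) : ℝ :=
  sigKernelFam m (fun _ => g) x y Lx Ly

/-- Random Fourier Feature kernel `κ̃(x,y) = (1/d̃) Σ_j cos ⟨w_j, x - y⟩` with
frequencies (columns) `W : Fin d̃ → ℝ^d`. -/
def rff {d dt : ℕ} (W : Fin dt → Euc d) (x y : Euc d) : ℝ :=
  (1 / (dt : ℝ)) * ∑ j : Fin dt, Real.cos (∑ a : Fin d, W j a * (x a - y a))

/-- Spectral (operator) norm of the `d × d̃` matrix with columns `W`. -/
def specNorm {d dt : ℕ} (W : Fin dt → Euc d) : ℝ :=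
  ‖LinearMap.toContinuousLinearMap (Matrix.toEuclideanLin (Matrix.of fun i j => W j i))‖

/-- Spectral (operator) norm of a square matrix. -/
def mSpecNorm {d : ℕ} (A : Matrix (Fin d) (Fin d) ℝ) : ℝ :=
  ‖LinearMap.toContinuousLinearMap (Matrix.toEuclideanLin A)‖

/-- `i`-th standard basis vector of `ℝ^d`. -/
def esingle (d : ℕ) (i : Fin d) : Euc d := EuclideanSpace.single i (1 : ℝ)

/-- The `d × d` matrix `(∂² g(s,t) / ∂s_i ∂t_j)_{i,j}` of mixed second partial derivatives
(the cross-derivative block of the Hessian) of a function `g : ℝ^d × ℝ^d → ℝ`. -/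
def crossDeriv {d : ℕ} (g : Euc d → Euc d → ℝ) (s t : Euc d) : Matrix (Fin d) (Fin d) ℝ :=
  Matrix.of fun i j =>
    fderiv ℝ (fun s' => fderiv ℝ (fun t' => g s' t') t (esingle d j)) s (esingle d i)


open scoped RealInnerProductSpace

-- Auxiliary lemmas

lemma cos_dd (u1 u0 v1 v0 : ℝ) :
    |Real.cos (u1 - v1) - Real.cos (u1 - v0) - Real.cos (u0 - v1) + Real.cos (u0 - v0)|
      ≤ |u1 - u0| * |v1 - v0| := by
  have key : Real.cos (u1 - v1) - Real.cos (u1 - v0) - Real.cos (u0 - v1) + Real.cos (u0 - v0)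
      = 4 * Real.sin ((u1 - u0)/2) * Real.sin ((v1 - v0)/2)
          * Real.cos ((u1 + u0 - v1 - v0)/2) := by
    have e1 : Real.cos (u1 - v1) - Real.cos (u0 - v1)
        = -2 * Real.sin ((u1 + u0 - 2*v1)/2) * Real.sin ((u1 - u0)/2) := by
      rw [Real.cos_sub_cos]; ring_nf
    have e2 : Real.cos (u1 - v0) - Real.cos (u0 - v0)
        = -2 * Real.sin ((u1 + u0 - 2*v0)/2) * Real.sin ((u1 - u0)/2) := by
      rw [Real.cos_sub_cos]; ring_nf
    have e3 : Real.sin ((u1 + u0 - 2*v0)/2) - Real.sin ((u1 + u0 - 2*v1)/2)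
        = 2 * Real.sin ((v1 - v0)/2) * Real.cos ((u1 + u0 - v1 - v0)/2) := by
      rw [Real.sin_sub_sin]; ring_nf
    linear_combination e1 - e2 + 2 * Real.sin ((u1 - u0)/2) * e3
  rw [key]
  have b1 : |Real.sin ((u1 - u0)/2)| ≤ |u1 - u0|/2 := by
    have := Real.abs_sin_le_abs (x := (u1 - u0)/2)
    rwa [abs_div, abs_two] at this
  have b2 : |Real.sin ((v1 - v0)/2)| ≤ |v1 - v0|/2 := by
    have := Real.abs_sin_le_abs (x := (v1 - v0)/2)
    rwa [abs_div, abs_two] at this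
  have b3 : |Real.cos ((u1 + u0 - v1 - v0)/2)| ≤ 1 := Real.abs_cos_le_one _
  rw [abs_mul, abs_mul, abs_mul]
  have h4 : |(4:ℝ)| = 4 := by norm_num
  rw [h4]
  have hab : |Real.sin ((u1 - u0)/2)| * |Real.sin ((v1 - v0)/2)|
      ≤ (|u1 - u0|/2) * (|v1 - v0|/2) :=
    mul_le_mul b1 b2 (abs_nonneg _) (by positivity)
  nlinarith [abs_nonneg (Real.cos ((u1 + u0 - v1 - v0)/2)),
    mul_nonneg (abs_nonneg (Real.sin ((u1 - u0)/2))) (abs_nonneg (Real.sin ((v1 - v0)/2))),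
    mul_nonneg (mul_nonneg (abs_nonneg (u1-u0)) (abs_nonneg (v1-v0)))
      (abs_nonneg (Real.cos ((u1 + u0 - v1 - v0)/2)))]

lemma sum_inner_sq_le {d dt : ℕ} (W : Fin dt → Euc d) (v : Euc d) :
    ∑ j : Fin dt, (∑ a : Fin d, W j a * v a) ^ 2 ≤ specNorm W ^ 2 * ‖v‖ ^ 2 := by
  set L := LinearMap.toContinuousLinearMap
      (Matrix.toEuclideanLin (Matrix.of fun i j => W j i)) with hL
  set u : Euc dt := (WithLp.equiv 2 (Fin dt → ℝ)).symm (fun j => ∑ a : Fin d, W j a * v a)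
    with hu
  have huj : ∀ j, u j = ∑ a : Fin d, W j a * v a := fun j => rfl
  have hsum : ∑ j : Fin dt, (∑ a : Fin d, W j a * v a) ^ 2 = ⟪L u, v⟫ := by
    rw [PiLp.inner_apply]
    have hLu : ∀ i, (L u) i = ∑ j : Fin dt, W j i * u j := by
      intro i
      rw [hL]
      simp only [LinearMap.coe_toContinuousLinearMap', Matrix.toEuclideanLin_apply,
        Matrix.mulVec,
        dotProduct, Matrix.of_apply]
    simp only [RCLike.inner_apply, starRingEnd_apply, star_trivial, hLu, huj]
    simp only [Finset.mul_sum]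
    rw [Finset.sum_comm]
    refine Finset.sum_congr rfl fun j _ => ?_
    conv_lhs => rw [sq]
    rw [Finset.sum_mul]
    refine Finset.sum_congr rfl fun i _ => ?_
    rw [Finset.mul_sum]; exact Finset.sum_congr rfl fun _ _ => by ring
  have hnu : ‖u‖ ^ 2 = ∑ j : Fin dt, (∑ a : Fin d, W j a * v a) ^ 2 := by
    rw [← real_inner_self_eq_norm_sq, PiLp.inner_apply]
    simp only [RCLike.inner_apply, starRingEnd_apply, star_trivial, huj]
    congr 1; ext j; rw [sq]
  have hin : ⟪L u, v⟫ ≤ ‖L‖ * ‖u‖ * ‖v‖ := by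
    calc ⟪L u, v⟫ ≤ ‖L u‖ * ‖v‖ := real_inner_le_norm _ _
    _ ≤ ‖L‖ * ‖u‖ * ‖v‖ := by
        gcongr
        exact L.le_opNorm u
  have hnu' : ‖u‖ ≤ ‖L‖ * ‖v‖ := by
    rcases eq_or_lt_of_le (norm_nonneg u) with h0 | h0
    · rw [← h0]; positivity
    · have : ‖u‖ * ‖u‖ ≤ (‖L‖ * ‖v‖) * ‖u‖ := by
        calc ‖u‖ * ‖u‖ = ‖u‖ ^ 2 := (sq ‖u‖).symm
        _ = ⟪L u, v⟫ := by rw [hnu, hsum]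
        _ ≤ ‖L‖ * ‖u‖ * ‖v‖ := hin
        _ = (‖L‖ * ‖v‖) * ‖u‖ := by ring
      exact le_of_mul_le_mul_right this h0
  calc ∑ j : Fin dt, (∑ a : Fin d, W j a * v a) ^ 2 = ‖u‖ ^ 2 := hnu.symm
  _ ≤ (‖L‖ * ‖v‖) ^ 2 := by
      apply pow_le_pow_left₀ (norm_nonneg u) hnu'
  _ = specNorm W ^ 2 * ‖v‖ ^ 2 := by rw [specNorm, ← hL, mul_pow]

lemma dDelta_rff_bound {d dt : ℕ} (W : Fin dt → Euc d) (x y : ℕ → Euc d) (a b : ℕ) :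
    |dDelta (rff W) x y a b|
      ≤ specNorm W ^ 2 / (dt : ℝ) * (‖x (a+1) - x a‖ * ‖y (b+1) - y b‖) := by
  have harg : ∀ (p q : Euc d) (j : Fin dt),
      (∑ c : Fin d, W j c * (p c - q c))
        = (∑ c : Fin d, W j c * p c) - (∑ c : Fin d, W j c * q c) := by
    intro p q j
    rw [← Finset.sum_sub_distrib]
    exact Finset.sum_congr rfl fun c _ => by ring
  set u1 : Fin dt → ℝ := fun j => ∑ c : Fin d, W j c * x (a+1) c with hu1
  set u0 : Fin dt → ℝ := fun j => ∑ c : Fin d, W j c * x a c with hu0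
  set v1 : Fin dt → ℝ := fun j => ∑ c : Fin d, W j c * y (b+1) c with hv1
  set v0 : Fin dt → ℝ := fun j => ∑ c : Fin d, W j c * y b c with hv0
  have hd : dDelta (rff W) x y a b
      = (1/(dt:ℝ)) * ∑ j : Fin dt,
          (Real.cos (u1 j - v1 j) - Real.cos (u1 j - v0 j)
            - Real.cos (u0 j - v1 j) + Real.cos (u0 j - v0 j)) := by
    simp only [dDelta, rff, harg, hu1, hu0, hv1, hv0]
    rw [← mul_sub, ← mul_sub, ← mul_add, ← Finset.sum_sub_distrib, ← Finset.sum_sub_distrib,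
      ← Finset.sum_add_distrib]
  have hdx : ∀ j, u1 j - u0 j = ∑ c : Fin d, W j c * (x (a+1) - x a) c := by
    intro j
    rw [hu1, hu0, ← Finset.sum_sub_distrib]
    refine Finset.sum_congr rfl fun c _ => ?_
    have : (x (a+1) - x a) c = x (a+1) c - x a c := rfl
    rw [this]; ring
  have hdy : ∀ j, v1 j - v0 j = ∑ c : Fin d, W j c * (y (b+1) - y b) c := by
    intro j
    rw [hv1, hv0, ← Finset.sum_sub_distrib]
    refine Finset.sum_congr rfl fun c _ => ?_
    have : (y (b+1) - y b) c = y (b+1) c - y b c := rfl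
    rw [this]; ring
  set Sx : Fin dt → ℝ := fun j => ∑ c : Fin d, W j c * (x (a+1) - x a) c with hSx
  set Sy : Fin dt → ℝ := fun j => ∑ c : Fin d, W j c * (y (b+1) - y b) c with hSy
  have step2 : |dDelta (rff W) x y a b| ≤ (1/(dt:ℝ)) * ∑ j : Fin dt, |Sx j| * |Sy j| := by
    rw [hd, abs_mul]
    have h1 : |1/(dt:ℝ)| = 1/(dt:ℝ) := abs_of_nonneg (by positivity)
    rw [h1]
    refine mul_le_mul_of_nonneg_left ?_ (by positivity)
    refine (Finset.abs_sum_le_sum_abs _ _).trans ?_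
    refine Finset.sum_le_sum fun j _ => ?_
    have := cos_dd (u1 j) (u0 j) (v1 j) (v0 j)
    rwa [hdx j, hdy j] at this
  have step3 : ∑ j : Fin dt, |Sx j| * |Sy j|
      ≤ specNorm W ^ 2 * (‖x (a+1) - x a‖ * ‖y (b+1) - y b‖) := by
    have cs := Finset.sum_mul_sq_le_sq_mul_sq Finset.univ (fun j => |Sx j|) (fun j => |Sy j|)
    have hx2 : ∑ j : Fin dt, |Sx j| ^ 2 ≤ specNorm W ^ 2 * ‖x (a+1) - x a‖ ^ 2 := by
      simp only [sq_abs]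
      exact sum_inner_sq_le W (x (a+1) - x a)
    have hy2 : ∑ j : Fin dt, |Sy j| ^ 2 ≤ specNorm W ^ 2 * ‖y (b+1) - y b‖ ^ 2 := by
      simp only [sq_abs]
      exact sum_inner_sq_le W (y (b+1) - y b)
    have hxnn : 0 ≤ ∑ j : Fin dt, |Sx j| ^ 2 :=
      Finset.sum_nonneg fun j _ => sq_nonneg _
    have hynn : 0 ≤ ∑ j : Fin dt, |Sy j| ^ 2 :=
      Finset.sum_nonneg fun j _ => sq_nonneg _
    have hsq : (∑ j : Fin dt, |Sx j| * |Sy j|) ^ 2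
        ≤ (specNorm W ^ 2 * (‖x (a+1) - x a‖ * ‖y (b+1) - y b‖)) ^ 2 := by
      calc (∑ j : Fin dt, |Sx j| * |Sy j|) ^ 2
          ≤ (∑ j : Fin dt, |Sx j| ^ 2) * ∑ j : Fin dt, |Sy j| ^ 2 := cs
        _ ≤ (specNorm W ^ 2 * ‖x (a+1) - x a‖ ^ 2) * (specNorm W ^ 2 * ‖y (b+1) - y b‖ ^ 2) :=
            mul_le_mul hx2 hy2 hynn (by positivity)
        _ = (specNorm W ^ 2 * (‖x (a+1) - x a‖ * ‖y (b+1) - y b‖)) ^ 2 := by ring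
    refine le_of_pow_le_pow_left₀ (by norm_num) (by positivity) hsq
  calc |dDelta (rff W) x y a b| ≤ (1/(dt:ℝ)) * ∑ j : Fin dt, |Sx j| * |Sy j| := step2
  _ ≤ (1/(dt:ℝ)) * (specNorm W ^ 2 * (‖x (a+1) - x a‖ * ‖y (b+1) - y b‖)) :=
      mul_le_mul_of_nonneg_left step3 (by positivity)
  _ = specNorm W ^ 2 / (dt : ℝ) * (‖x (a+1) - x a‖ * ‖y (b+1) - y b‖) := by ring

lemma aux_binom (m : ℕ) {S a : ℝ} (hS : 0 ≤ S) (ha : 0 ≤ a) :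
    S ^ (m + 1) + (m + 1 : ℝ) * a * S ^ m ≤ (S + a) ^ (m + 1) := by
  induction m with
  | zero => simp
  | succ n ih =>
    have hpow : (0:ℝ) ≤ S ^ n := pow_nonneg hS n
    have h1 : (S + a) * (S ^ (n+1) + ((n:ℝ)+1) * a * S ^ n) ≤ (S + a) ^ (n+1+1) := by
      calc (S + a) * (S ^ (n+1) + ((n:ℝ)+1) * a * S ^ n)
          ≤ (S + a) * (S + a) ^ (n+1) := mul_le_mul_of_nonneg_left ih (by linarith)
        _ = (S + a) ^ (n+1+1) := by ring
    have expand : (S + a) * (S ^ (n+1) + ((n:ℝ)+1) * a * S ^ n)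
        = S ^ (n+1+1) + ((n:ℝ)+1+1) * a * S ^ (n+1) + ((n:ℝ)+1) * a ^ 2 * S ^ n := by ring
    have hnn : (0:ℝ) ≤ ((n:ℝ)+1) * a ^ 2 * S ^ n := by positivity
    push_cast
    linarith

lemma aux_powerset {α : Type*} [DecidableEq α] (a : α → ℝ) (ha : ∀ x, 0 ≤ a x)
    (u : Finset α) : ∀ m : ℕ,
    (m.factorial : ℝ) * ∑ s ∈ u.powersetCard m, ∏ x ∈ s, a x ≤ (∑ x ∈ u, a x) ^ m := by
  classical
  induction u using Finset.induction_on with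
  | empty =>
    intro m
    cases m with
    | zero => simp
    | succ n =>
      have he : (∅ : Finset α).powersetCard (n+1) = ∅ := by
        ext s
        simp only [Finset.mem_powersetCard, Finset.subset_empty, Finset.notMem_empty,
          iff_false, not_and]
        rintro rfl
        simp
      simp [he]
  | insert c u hxu ih =>
    intro m
    cases m with
    | zero => simp
    | succ n =>
      rw [Finset.powersetCard_succ_insert hxu]
      have hdisj : Disjoint (u.powersetCard (n+1)) ((u.powersetCard n).image (insert c)) := by
        rw [Finset.disjoint_left]
        intro s hs hs'
        obtain ⟨t, ht, rfl⟩ := Finset.mem_image.mp hs'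
        have : c ∈ u := (Finset.mem_powersetCard.mp hs).1 (Finset.mem_insert_self c t)
        exact hxu this
      rw [Finset.sum_union hdisj]
      have himg : ∑ s ∈ (u.powersetCard n).image (insert c), ∏ x ∈ s, a x
          = a c * ∑ s ∈ u.powersetCard n, ∏ x ∈ s, a x := by
        rw [Finset.sum_image, Finset.mul_sum]
        · refine Finset.sum_congr rfl fun s hs => ?_
          have hcs : c ∉ s := fun h => hxu ((Finset.mem_powersetCard.mp hs).1 h)
          rw [Finset.prod_insert hcs]
        · intro s hs t ht hst
          have hcs : c ∉ s := fun h => hxu ((Finset.mem_powersetCard.mp hs).1 h)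
          have hct : c ∉ t := fun h => hxu ((Finset.mem_powersetCard.mp ht).1 h)
          rw [← Finset.erase_insert hcs, ← Finset.erase_insert hct, hst]
      rw [himg, Finset.sum_insert hxu]
      have hSnn : 0 ≤ ∑ x ∈ u, a x := Finset.sum_nonneg fun x _ => ha x
      have h1 := ih (n + 1)
      have h2 := ih n
      have hsum1 : 0 ≤ ∑ s ∈ u.powersetCard n, ∏ x ∈ s, a x :=
        Finset.sum_nonneg fun s _ => Finset.prod_nonneg fun x _ => ha x
      have h2' : ((n:ℝ) + 1) * a c * ((n.factorial : ℝ) * ∑ s ∈ u.powersetCard n, ∏ x ∈ s, a x)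
          ≤ ((n:ℝ) + 1) * a c * (∑ x ∈ u, a x) ^ n :=
        mul_le_mul_of_nonneg_left h2 (mul_nonneg (by positivity) (ha c))
      have heq : ((n+1).factorial : ℝ) *
            ((∑ s ∈ u.powersetCard (n+1), ∏ x ∈ s, a x)
              + a c * ∑ s ∈ u.powersetCard n, ∏ x ∈ s, a x)
          = ((n+1).factorial : ℝ) * (∑ s ∈ u.powersetCard (n+1), ∏ x ∈ s, a x)
            + ((n:ℝ) + 1) * a c *
              ((n.factorial : ℝ) * ∑ s ∈ u.powersetCard n, ∏ x ∈ s, a x) := by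
        rw [Nat.factorial_succ]
        push_cast
        ring
      have hb := aux_binom n hSnn (ha c)
      have hfin : (∑ x ∈ u, a x + a c) ^ (n+1) = (a c + ∑ x ∈ u, a x) ^ (n+1) := by ring
      rw [heq]
      calc ((n+1).factorial : ℝ) * (∑ s ∈ u.powersetCard (n+1), ∏ x ∈ s, a x)
            + ((n:ℝ) + 1) * a c *
              ((n.factorial : ℝ) * ∑ s ∈ u.powersetCard n, ∏ x ∈ s, a x)
          ≤ (∑ x ∈ u, a x) ^ (n+1) + ((n:ℝ) + 1) * a c * (∑ x ∈ u, a x) ^ n := by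
            linarith
        _ ≤ (∑ x ∈ u, a x + a c) ^ (n+1) := hb
        _ = (a c + ∑ x ∈ u, a x) ^ (n+1) := hfin

open scoped Classical in
lemma strictMono_sum_eq {n m : ℕ} (a : Fin n → ℝ) :
    ∑ i ∈ Finset.univ.filter (fun i : Fin m → Fin n => StrictMono i), ∏ p : Fin m, a (i p)
      = ∑ s ∈ (Finset.univ : Finset (Fin n)).powersetCard m, ∏ x ∈ s, a x := by
  classical
  have hcard : ∀ (f : Fin m → Fin n), StrictMono f →
      (Finset.image f Finset.univ).card = m := by
    intro f hf
    rw [Finset.card_image_of_injective _ hf.injective, Finset.card_univ, Fintype.card_fin]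
  refine Finset.sum_bij'
    (fun f _ => Finset.image f Finset.univ)
    (fun s hs => fun p => s.orderEmbOfFin (Finset.mem_powersetCard.mp hs).2 p)
    ?_ ?_ ?_ ?_ ?_
  · intro f hf
    have hsm : StrictMono f := (Finset.mem_filter.mp hf).2
    exact Finset.mem_powersetCard.mpr ⟨Finset.subset_univ _, hcard f hsm⟩
  · intro s hs
    refine Finset.mem_filter.mpr ⟨Finset.mem_univ _, ?_⟩
    exact (s.orderEmbOfFin _).strictMono
  · intro f hf
    have hsm : StrictMono f := (Finset.mem_filter.mp hf).2
    exact (Finset.orderEmbOfFin_unique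
      ((Finset.mem_powersetCard.mp (Finset.mem_powersetCard.mpr
        ⟨Finset.subset_univ _, hcard f hsm⟩)).2)
      (fun p => Finset.mem_image_of_mem f (Finset.mem_univ p)) hsm).symm
  · intro s hs
    ext z
    constructor
    · intro hz
      obtain ⟨p, _, rfl⟩ := Finset.mem_image.mp hz
      exact Finset.orderEmbOfFin_mem s _ p
    · intro hz
      have hr := Finset.range_orderEmbOfFin s (Finset.mem_powersetCard.mp hs).2
      have hz' : z ∈ Set.range (s.orderEmbOfFin (Finset.mem_powersetCard.mp hs).2) := by
        rw [hr]; exact hz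
      obtain ⟨p, hp⟩ := hz'
      exact Finset.mem_image.mpr ⟨p, Finset.mem_univ p, hp⟩
  · intro f hf
    have hsm : StrictMono f := (Finset.mem_filter.mp hf).2
    rw [Finset.prod_image (fun p _ q _ h => hsm.injective h)]

open scoped Classical in
lemma strictMono_sum_le {n m : ℕ} (a : Fin n → ℝ) (ha : ∀ i, 0 ≤ a i) :
    ∑ i ∈ Finset.univ.filter (fun i : Fin m → Fin n => StrictMono i), ∏ p : Fin m, a (i p)
      ≤ (∑ i : Fin n, a i) ^ m / (m.factorial : ℝ) := by
  rw [strictMono_sum_eq, le_div_iff₀ (by positivity : (0:ℝ) < (m.factorial : ℝ)), mul_comm]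
  exact aux_powerset a ha Finset.univ m


/-- **Random upper bound for the level-`m` RFSF kernel.** For arbitrary matrices
`W⁽¹⁾, …, W⁽ᵐ⁾ ∈ ℝ^{d × d̃}` (given by their columns) with RFF kernels `κ̃_p`, the level-`m`
Random Fourier Signature Feature kernel (which uses `κ̃_p` in the `p`-th factor) satisfies
`|k̃_S^m(x,y)| ≤ (Π_p ‖W⁽ᵖ⁾‖₂² / (m!)²) (‖x‖_{1-var} ‖y‖_{1-var} / d̃)^m`. -/
theorem rfsf_kernel_norm_bound {d dt : ℕ} (m : ℕ) (W : Fin m → Fin dt → Euc d)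
    (x y : ℕ → Euc d) (Lx Ly : ℕ) :
    |sigKernelFam m (fun p => rff (W p)) x y Lx Ly|
      ≤ (∏ p : Fin m, specNorm (W p) ^ 2) / (m.factorial : ℝ) ^ 2 *
          (oneVar x Lx * oneVar y Ly / (dt : ℝ)) ^ m := by
  classical
  set ax : Fin Lx → ℝ := fun i => ‖x ((i : ℕ) + 1) - x i‖ with hax'
  set ay : Fin Ly → ℝ := fun i => ‖y ((i : ℕ) + 1) - y i‖ with hay'
  have hax : ∀ i, 0 ≤ ax i := fun i => norm_nonneg _
  have hay : ∀ i, 0 ≤ ay i := fun i => norm_nonneg _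
  set cc : Fin m → ℝ := fun p => specNorm (W p) ^ 2 / (dt : ℝ) with hcc'
  have hcc : ∀ p, 0 ≤ cc p := fun p => div_nonneg (by positivity) (Nat.cast_nonneg dt)
  set F := Finset.univ.filter (fun i : Fin m → Fin Lx => StrictMono i) with hF
  set G := Finset.univ.filter (fun j : Fin m → Fin Ly => StrictMono j) with hG
  have h1 : |sigKernelFam m (fun p => rff (W p)) x y Lx Ly|
      ≤ ∑ i ∈ F, ∑ j ∈ G, ∏ p : Fin m, (cc p * (ax (i p) * ay (j p))) := by
    rw [sigKernelFam]
    refine (Finset.abs_sum_le_sum_abs _ _).trans ?_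
    refine Finset.sum_le_sum fun i _ => ?_
    refine (Finset.abs_sum_le_sum_abs _ _).trans ?_
    refine Finset.sum_le_sum fun j _ => ?_
    rw [Finset.abs_prod]
    refine Finset.prod_le_prod (fun p _ => abs_nonneg _) fun p _ => ?_
    have := dDelta_rff_bound (W p) x y (i p) (j p)
    calc |dDelta (rff (W p)) x y (i p) (j p)|
        ≤ specNorm (W p) ^ 2 / (dt : ℝ) * (‖x ((i p : ℕ)+1) - x (i p)‖ * ‖y ((j p : ℕ)+1) - y (j p)‖) :=
          this
      _ = cc p * (ax (i p) * ay (j p)) := rfl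
  have h2 : ∑ i ∈ F, ∑ j ∈ G, ∏ p : Fin m, (cc p * (ax (i p) * ay (j p)))
      = (∏ p : Fin m, cc p) *
          ((∑ i ∈ F, ∏ p : Fin m, ax (i p)) * (∑ j ∈ G, ∏ p : Fin m, ay (j p))) := by
    have hterm : ∀ (i : Fin m → Fin Lx) (j : Fin m → Fin Ly),
        ∏ p : Fin m, (cc p * (ax (i p) * ay (j p)))
          = (∏ p : Fin m, cc p) * ((∏ p : Fin m, ax (i p)) * (∏ p : Fin m, ay (j p))) := by
      intro i j
      rw [← Finset.prod_mul_distrib, ← Finset.prod_mul_distrib]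
    simp only [hterm]
    conv_rhs => rw [Finset.sum_mul_sum, Finset.mul_sum]
    refine Finset.sum_congr rfl fun i _ => ?_
    conv_rhs => rw [Finset.mul_sum]
  have h3 : ∑ i ∈ F, ∏ p : Fin m, ax (i p) ≤ (∑ i : Fin Lx, ax i) ^ m / (m.factorial : ℝ) := by
    rw [hF]; exact strictMono_sum_le ax hax
  have h4 : ∑ j ∈ G, ∏ p : Fin m, ay (j p) ≤ (∑ i : Fin Ly, ay i) ^ m / (m.factorial : ℝ) := by
    rw [hG]; exact strictMono_sum_le ay hay
  have hVx : oneVar x Lx = ∑ i : Fin Lx, ax i := by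
    rw [oneVar]
    exact (Fin.sum_univ_eq_sum_range (fun i => ‖x (i + 1) - x i‖) Lx).symm
  have hVy : oneVar y Ly = ∑ i : Fin Ly, ay i := by
    rw [oneVar]
    exact (Fin.sum_univ_eq_sum_range (fun i => ‖y (i + 1) - y i‖) Ly).symm
  have hsx : 0 ≤ ∑ i ∈ F, ∏ p : Fin m, ax (i p) :=
    Finset.sum_nonneg fun i _ => Finset.prod_nonneg fun p _ => hax _
  have hsy : 0 ≤ ∑ j ∈ G, ∏ p : Fin m, ay (j p) :=
    Finset.sum_nonneg fun j _ => Finset.prod_nonneg fun p _ => hay _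
  have hpc : 0 ≤ ∏ p : Fin m, cc p := Finset.prod_nonneg fun p _ => hcc p
  have hVxnn : 0 ≤ ∑ i : Fin Lx, ax i := Finset.sum_nonneg fun i _ => hax i
  have hVynn : 0 ≤ ∑ i : Fin Ly, ay i := Finset.sum_nonneg fun i _ => hay i
  have h5 : (∏ p : Fin m, cc p) *
        ((∑ i ∈ F, ∏ p : Fin m, ax (i p)) * (∑ j ∈ G, ∏ p : Fin m, ay (j p)))
      ≤ (∏ p : Fin m, cc p) *
        (((∑ i : Fin Lx, ax i) ^ m / (m.factorial : ℝ)) *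
          ((∑ i : Fin Ly, ay i) ^ m / (m.factorial : ℝ))) := by
    refine mul_le_mul_of_nonneg_left ?_ hpc
    exact mul_le_mul h3 h4 hsy (by positivity)
  have hprodc : (∏ p : Fin m, cc p) = (∏ p : Fin m, specNorm (W p) ^ 2) / (dt : ℝ) ^ m := by
    rw [hcc']
    rw [Finset.prod_div_distrib]
    congr 1
    rw [Finset.prod_const, Finset.card_univ, Fintype.card_fin]
  have hfinal : (∏ p : Fin m, cc p) *
        (((∑ i : Fin Lx, ax i) ^ m / (m.factorial : ℝ)) *
          ((∑ i : Fin Ly, ay i) ^ m / (m.factorial : ℝ)))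
      = (∏ p : Fin m, specNorm (W p) ^ 2) / (m.factorial : ℝ) ^ 2 *
          (oneVar x Lx * oneVar y Ly / (dt : ℝ)) ^ m := by
    rw [hprodc, hVx, hVy, div_pow, mul_pow, div_mul_div_comm, div_mul_div_comm,
      div_mul_div_comm]
    congr 1 <;> ring
  calc |sigKernelFam m (fun p => rff (W p)) x y Lx Ly|
      ≤ ∑ i ∈ F, ∑ j ∈ G, ∏ p : Fin m, (cc p * (ax (i p) * ay (j p))) := h1
    _ = (∏ p : Fin m, cc p) *
          ((∑ i ∈ F, ∏ p : Fin m, ax (i p)) * (∑ j ∈ G, ∏ p : Fin m, ay (j p))) := h2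
    _ ≤ (∏ p : Fin m, cc p) *
          (((∑ i : Fin Lx, ax i) ^ m / (m.factorial : ℝ)) *
            ((∑ i : Fin Ly, ay i) ^ m / (m.factorial : ℝ))) := h5
    _ = _ := hfinal


end
end

section
/- Let G = (V, E, f) be a finite labelled graph with vertex set V = {1, …, n}, adjacency relation i ∼ j, every vertex of degree deg(i) ≥ 1, and node attributes f : V → ℝ^d, and let P ∈ ℝ^{n×n} be the random-walk transition matrix P_{ij} = 1/deg(i) if i ∼ j, else 0. Fix M ≥ 1 and vectors u_1, …, u_M ∈ ℝ^d, and for u ∈ ℝ^d define C^u ∈ ℝ^{n×n} by C^u_{ij} = ⟨u, f(j) − f(i)⟩ if i ∼ j, else 0. Define vectors f_{k,m} ∈ ℝ^n by f_{k,0} = 𝟙 (the all-ones vector), f_{1,m} = (1/m!)·(P ⊙ C^{u_{M−m+1}} ⊙ ⋯ ⊙ C^{u_M})·𝟙 for 1 ≤ m ≤ M, and for k ≥ 2: f_{k,m} = P·f_{k−1,m} + Σ_{r=1}^m (1/r!)·(P ⊙ C^{u_{M−m+1}} ⊙ ⋯ ⊙ C^{u_{M−m+r}})·f_{k−1,m−r},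 where ⊙ denotes the entrywise (Hadamard) product of matrices. Then for every vertex i, every k ≥ 1 and every 1 ≤ m ≤ M: f_{k,m}(i) = Σ over all walks (i = i_0 ∼ ⋯ ∼ i_k) of (Π_{q=1}^k 1/deg(i_{q−1})) · Σ_{j ∈ Δ̄_m(k)} (1/j!) · Π_{p=1}^m ⟨u_{M−m+p}, f(i_{j_p}) − f(i_{j_p − 1})⟩; that is, f_{k,m}(i) equals the pairing ⟨u_{M−m+1} ⊗ ⋯ ⊗ u_M, Φ̂_k(i)⟩ of the rank-one degree-m tensor with the level-m expected tensor-exponential feature Φ̂_k(i) = E[exp_⊗(δ₁L)⋯exp_⊗(δₖL) | B₀ = i] of the length-k simple random walk started at i. -/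
noncomputable section
open Finset

lemma card_filter_val_lt (m r : ℕ) (hr : r ≤ m) :
    (Finset.univ.filter fun p : Fin m => (p : ℕ) < r).card = r := by
  conv_rhs => rw [← Finset.card_range r]
  refine Finset.card_bij' (fun p _ => (p : ℕ)) (fun a ha => (⟨a, by
    simp only [Finset.mem_range] at ha; omega⟩ : Fin m)) ?_ ?_ ?_ ?_
  · intro p hp; simp only [Finset.mem_filter] at hp; simp [hp.2]
  · intro a ha; simp only [Finset.mem_range] at ha; simp [ha]
  · intro p hp; rfl
  · intro a ha; rfl

/-- number of indices mapped to zero -/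
def zc {m k : ℕ} (jj : Fin m → Fin (k + 1)) : ℕ :=
  (Finset.univ.filter fun p => jj p = 0).card

lemma zc_le {m k : ℕ} (jj : Fin m → Fin (k + 1)) : zc jj ≤ m := by
  have := Finset.card_filter_le (Finset.univ : Finset (Fin m)) (fun p => jj p = 0)
  simpa [zc] using this

lemma zero_iff_lt_zc {m k : ℕ} {jj : Fin m → Fin (k + 1)} (hjj : Monotone jj)
    (p : Fin m) : jj p = 0 ↔ (p : ℕ) < zc jj := by
  constructor
  · intro hp
    have hsub : (Finset.univ.filter fun p' : Fin m => (p' : ℕ) < (p : ℕ) + 1)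
        ⊆ (Finset.univ.filter fun p' => jj p' = 0) := by
      intro p' hp'
      simp only [Finset.mem_filter, Finset.mem_univ, true_and] at hp' ⊢
      have : jj p' ≤ jj p := hjj (by rw [Fin.le_def]; omega)
      rw [hp] at this
      exact Fin.le_zero_iff.mp this
    have := Finset.card_le_card hsub
    rw [card_filter_val_lt m ((p : ℕ) + 1) (by have := p.isLt; omega)] at this
    unfold zc; omega
  · intro hp
    by_contra hne
    have hsub : (Finset.univ.filter fun p' : Fin m => jj p' = 0)
        ⊆ (Finset.univ.filter fun p' : Fin m => (p' : ℕ) < (p : ℕ)) := by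
      intro p' hp'
      simp only [Finset.mem_filter, Finset.mem_univ, true_and] at hp' ⊢
      by_contra hge
      have : jj p ≤ jj p' := hjj (by rw [Fin.le_def]; omega)
      rw [hp'] at this
      exact hne (Fin.le_zero_iff.mp this)
    have := Finset.card_le_card hsub
    rw [card_filter_val_lt m (p : ℕ) (by have := p.isLt; omega)] at this
    unfold zc at hp; omega

def glueIdx {m k : ℕ} (r : ℕ) (jj : Fin (m - r) → Fin k) : Fin m → Fin (k + 1) :=
  fun p => if h : (p : ℕ) < r then 0 else
    (jj ⟨(p : ℕ) - r, by have := p.isLt; omega⟩).succ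

lemma glueIdx_monotone {m k : ℕ} (r : ℕ) (jj : Fin (m - r) → Fin k)
    (hjj : Monotone jj) : Monotone (glueIdx r jj) := by
  intro p p' hpp
  have hv := Fin.le_def.mp hpp
  unfold glueIdx
  by_cases h : (p : ℕ) < r
  · simp [h, Fin.zero_le]
  · have h' : ¬ (p' : ℕ) < r := by omega
    simp only [h, h', dif_neg, not_false_iff]
    rw [Fin.succ_le_succ_iff]
    exact hjj (by rw [Fin.le_def]; simp; omega)

lemma glueIdx_val_ge {m k : ℕ} (r : ℕ) (jj : Fin (m - r) → Fin k) (p : Fin m)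
    (hge : r ≤ (p : ℕ)) :
    glueIdx r jj p = (jj ⟨(p : ℕ) - r, by have := p.isLt; omega⟩).succ := by
  unfold glueIdx
  rw [dif_neg (by omega)]

lemma glueIdx_eq_zero_iff {m k : ℕ} (r : ℕ) (jj : Fin (m - r) → Fin k) (p : Fin m) :
    glueIdx r jj p = 0 ↔ (p : ℕ) < r := by
  unfold glueIdx
  by_cases h : (p : ℕ) < r
  · simp [h]
  · simp only [h, dif_neg, not_false_iff, iff_false]
    exact Fin.succ_ne_zero _

lemma zc_glueIdx {m k : ℕ} (r : ℕ) (hr : r ≤ m) (jj : Fin (m - r) → Fin k) :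
    zc (glueIdx r jj) = r := by
  unfold zc
  rw [Finset.filter_congr (fun p _ => by
    rw [show ((glueIdx r jj p = 0) = ((p:ℕ) < r)) from propext (glueIdx_eq_zero_iff r jj p)])]
  exact card_filter_val_lt m r hr

lemma mult_glueIdx_succ {m k : ℕ} (r : ℕ) (hr : r ≤ m) (jj : Fin (m - r) → Fin k)
    (v : Fin k) :
    (Finset.univ.filter fun p : Fin m => glueIdx r jj p = v.succ).card
      = (Finset.univ.filter fun q : Fin (m - r) => jj q = v).card := by
  refine Finset.card_bij'
    (fun p hp => (⟨(p : ℕ) - r, by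
      simp only [Finset.mem_filter, Finset.mem_univ, true_and] at hp
      have hnp : ¬ (p:ℕ) < r := by
        intro h
        unfold glueIdx at hp
        rw [dif_pos h] at hp
        exact Fin.succ_ne_zero v hp.symm
      have := p.isLt
      omega⟩ : Fin (m - r)))
    (fun q hq => (⟨(q : ℕ) + r, by have := q.isLt; omega⟩ : Fin m)) ?_ ?_ ?_ ?_
  · intro p hp
    simp only [Finset.mem_filter, Finset.mem_univ, true_and] at hp ⊢
    have hnp : ¬ (p:ℕ) < r := by
      by_contra h
      unfold glueIdx at hp; rw [dif_pos h] at hp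
      exact Fin.succ_ne_zero v hp.symm
    unfold glueIdx at hp
    rw [dif_neg hnp] at hp
    exact Fin.succ_injective _ hp
  · intro q hq
    simp only [Finset.mem_filter, Finset.mem_univ, true_and] at hq ⊢
    unfold glueIdx
    rw [dif_neg (by simp)]
    congr 1
    convert hq using 2
    apply Fin.ext
    simp
  · intro p hp; apply Fin.ext; simp only [Finset.mem_filter, Finset.mem_univ, true_and] at hp
    have hnp : ¬ (p:ℕ) < r := by
      by_contra h
      unfold glueIdx at hp; rw [dif_pos h] at hp
      exact Fin.succ_ne_zero v hp.symm
    simp; omega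
  · intro q hq; apply Fin.ext; simp

lemma jfact_eq_prod_univ {m k : ℕ} (jj : Fin m → Fin k) :
    (∏ v ∈ Finset.univ.image jj,
      (Finset.univ.filter fun pp => jj pp = v).card.factorial)
    = ∏ v : Fin k, (Finset.univ.filter fun pp => jj pp = v).card.factorial := by
  apply Finset.prod_subset (Finset.subset_univ _)
  intro v _ hv
  have : (Finset.univ.filter fun pp => jj pp = v) = ∅ := by
    rw [Finset.eq_empty_iff_forall_notMem]
    intro p hp
    simp only [Finset.mem_filter, Finset.mem_univ, true_and] at hp
    exact hv (Finset.mem_image.mpr ⟨p, Finset.mem_univ p, hp⟩)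
  rw [this]; simp

lemma jfact_glueIdx {m k : ℕ} (r : ℕ) (hr : r ≤ m) (jj : Fin (m - r) → Fin k) :
    (∏ v ∈ Finset.univ.image (glueIdx r jj),
      (Finset.univ.filter fun pp => glueIdx r jj pp = v).card.factorial)
    = r.factorial * ∏ v ∈ Finset.univ.image jj,
        (Finset.univ.filter fun pp => jj pp = v).card.factorial := by
  rw [jfact_eq_prod_univ, jfact_eq_prod_univ, Fin.prod_univ_succ]
  congr 1
  · congr 1
    have : (Finset.univ.filter fun pp : Fin m => glueIdx r jj pp = 0)
        = Finset.univ.filter fun p : Fin m => (p : ℕ) < r := by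
      apply Finset.filter_congr
      intro p _
      simp [glueIdx_eq_zero_iff]
    rw [this, card_filter_val_lt m r hr]
  · apply Finset.prod_congr rfl
    intro v _
    rw [mult_glueIdx_succ r hr jj v]

set_option maxHeartbeats 1000000 in
lemma sum_monotone_decomp {m k : ℕ} (T : (Fin m → Fin (k + 1)) → ℝ) :
    ∑ jj ∈ Finset.univ.filter (fun jj : Fin m → Fin (k + 1) => Monotone jj), T jj
    = ∑ r ∈ Finset.range (m + 1),
        ∑ jj' ∈ Finset.univ.filter (fun jj' : Fin (m - r) → Fin k => Monotone jj'),
          T (glueIdx r jj') := by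
  rw [Finset.sum_sigma']
  refine Finset.sum_bij'
    (fun jj hjj => (⟨zc jj, fun q => (jj ⟨(q : ℕ) + zc jj, by have := q.isLt; omega⟩).pred (by
      have hjm : Monotone jj := (Finset.mem_filter.mp hjj).2
      intro h0
      have h1 := (zero_iff_lt_zc hjm _).mp h0
      simp only at h1
      omega)⟩ : Σ r : ℕ, Fin (m - r) → Fin k))
    (fun x _ => glueIdx x.1 x.2) ?_ ?_ ?_ ?_ ?_
  · intro jj hjj
    have hjm : Monotone jj := (Finset.mem_filter.mp hjj).2
    simp only [Finset.mem_sigma, Finset.mem_range, Finset.mem_filter, Finset.mem_univ, true_and]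
    constructor
    · have := zc_le jj; omega
    · intro q q' hq
      rw [Fin.le_def]
      simp only [Fin.coe_pred]
      have : jj ⟨(q : ℕ) + zc jj, by have := q.isLt; omega⟩
          ≤ jj ⟨(q' : ℕ) + zc jj, by have := q'.isLt; omega⟩ := by
        apply hjm
        rw [Fin.le_def]
        have := Fin.le_def.mp hq
        simpa using by omega
      have := Fin.le_def.mp this
      omega
  · intro x hx
    simp only [Finset.mem_sigma, Finset.mem_range, Finset.mem_filter, Finset.mem_univ,
      true_and] at hx
    simp only [Finset.mem_filter, Finset.mem_univ, true_and]
    exact glueIdx_monotone x.1 x.2 hx.2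
  · intro jj hjj
    have hjm : Monotone jj := (Finset.mem_filter.mp hjj).2
    funext p
    dsimp only
    unfold glueIdx
    by_cases h : (p : ℕ) < zc jj
    · rw [dif_pos h]
      exact ((zero_iff_lt_zc hjm p).mpr h).symm
    · rw [dif_neg h]
      rw [Fin.succ_pred]
      congr 1
      apply Fin.ext
      simp only
      omega
  · rintro ⟨r, jj'⟩ hx
    dsimp only
    simp only [Finset.mem_sigma, Finset.mem_range, Finset.mem_filter, Finset.mem_univ,
      true_and] at hx
    have hr : r ≤ m := by omega
    have h1 : zc (glueIdx r jj') = r := zc_glueIdx r hr jj'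
    refine Sigma.ext h1 ((Fin.heq_fun_iff (by dsimp only; rw [h1])).mpr ?_)
    intro q
    dsimp only
    apply Fin.succ_injective
    rw [Fin.succ_pred]
    have hq : (q : ℕ) < m - zc (glueIdx r jj') := q.isLt
    rw [glueIdx_val_ge r jj' _ (by
      show r ≤ (q : ℕ) + zc (glueIdx r jj')
      omega)]
    congr 1
    congr 1
    apply Fin.ext
    show (q : ℕ) + zc (glueIdx r jj') - r = (q : ℕ)
    omega
  · intro jj hjj
    have hjm : Monotone jj := (Finset.mem_filter.mp hjj).2
    congr 1
    funext p
    dsimp only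
    symm
    unfold glueIdx
    by_cases h : (p : ℕ) < zc jj
    · rw [dif_pos h]
      exact ((zero_iff_lt_zc hjm p).mpr h).symm
    · rw [dif_neg h]
      rw [Fin.succ_pred]
      congr 1
      apply Fin.ext
      simp only
      omega

lemma walk_sum_decomp {n : ℕ} (G : SimpleGraph (Fin n)) [DecidableRel G.Adj]
    (k : ℕ) (i : Fin n) (g : (Fin (k + 2) → Fin n) → ℝ) :
    ∑ wk ∈ Finset.univ.filter (fun wk : Fin (k + 2) → Fin n =>
        wk 0 = i ∧ ∀ q : Fin (k + 1), G.Adj (wk q.castSucc) (wk q.succ)), g wk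
    = ∑ j ∈ G.neighborFinset i,
        ∑ wk' ∈ Finset.univ.filter (fun wk' : Fin (k + 1) → Fin n =>
          wk' 0 = j ∧ ∀ q : Fin k, G.Adj (wk' q.castSucc) (wk' q.succ)),
          g (Fin.cons i wk') := by
  rw [Finset.sum_sigma']
  refine Finset.sum_bij'
    (fun wk _ => (⟨wk 1, fun q => wk q.succ⟩ : Σ _j : Fin n, Fin (k + 1) → Fin n))
    (fun x _ => Fin.cons i x.2) ?_ ?_ ?_ ?_ ?_
  · intro wk hwk
    simp only [Finset.mem_filter, Finset.mem_univ, true_and] at hwk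
    obtain ⟨h0, hadj⟩ := hwk
    simp only [Finset.mem_sigma, SimpleGraph.mem_neighborFinset, Finset.mem_filter,
      Finset.mem_univ, true_and]
    refine ⟨?_, rfl, ?_⟩
    · rw [← h0]
      have h01 := hadj 0
      rw [Fin.castSucc_zero, Fin.succ_zero_eq_one] at h01
      exact h01
    · intro q
      have := hadj q.succ
      rwa [← Fin.succ_castSucc] at this
  · intro x hx
    simp only [Finset.mem_sigma, SimpleGraph.mem_neighborFinset, Finset.mem_filter,
      Finset.mem_univ, true_and] at hx
    obtain ⟨hadj, h0, hx2⟩ := hx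
    simp only [Finset.mem_filter, Finset.mem_univ, true_and]
    refine ⟨Fin.cons_zero _ _, ?_⟩
    intro q
    induction q using Fin.cases with
    | zero =>
      rw [Fin.castSucc_zero, Fin.cons_zero, Fin.cons_succ, h0]
      exact hadj
    | succ q' =>
      rw [← Fin.succ_castSucc, Fin.cons_succ, Fin.cons_succ]
      exact hx2 q'
  · intro wk hwk
    simp only [Finset.mem_filter, Finset.mem_univ, true_and] at hwk
    dsimp only
    funext p
    induction p using Fin.cases with
    | zero => rw [Fin.cons_zero, hwk.1]
    | succ p' => rw [Fin.cons_succ]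
  · rintro ⟨j, wk'⟩ hx
    simp only [Finset.mem_sigma, SimpleGraph.mem_neighborFinset, Finset.mem_filter,
      Finset.mem_univ, true_and] at hx
    refine Sigma.ext ?_ (heq_of_eq ?_)
    · dsimp only
      rw [← Fin.succ_zero_eq_one, Fin.cons_succ, hx.2.1]
    · dsimp only
      funext q
      rw [Fin.cons_succ]
  · intro wk hwk
    simp only [Finset.mem_filter, Finset.mem_univ, true_and] at hwk
    dsimp only
    congr 1
    funext p
    induction p using Fin.cases with
    | zero => rw [Fin.cons_zero, hwk.1]
    | succ p' => rw [Fin.cons_succ]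

lemma cons_weight {n : ℕ} (G : SimpleGraph (Fin n)) [DecidableRel G.Adj] (k : ℕ) (i : Fin n)
    (wk' : Fin (k + 1) → Fin n) :
    ∏ q : Fin (k + 1), ((G.degree ((Fin.cons i wk' : Fin (k + 2) → Fin n) q.castSucc) : ℝ))⁻¹
    = ((G.degree i : ℝ))⁻¹ * ∏ q : Fin k, ((G.degree (wk' q.castSucc) : ℝ))⁻¹ := by
  rw [Fin.prod_univ_succ]
  have h0 : ((Fin.cons i wk' : Fin (k + 2) → Fin n) ((0 : Fin (k + 1)).castSucc)) = i := by
    rw [Fin.castSucc_zero, Fin.cons_zero]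
  rw [h0]
  congr 1


lemma walk_weight_sum {n : ℕ} (G : SimpleGraph (Fin n)) [DecidableRel G.Adj]
    (hdeg : ∀ i, 1 ≤ G.degree i) :
    ∀ (k : ℕ) (i : Fin n),
    ∑ wk ∈ Finset.univ.filter (fun wk : Fin (k + 1) → Fin n =>
        wk 0 = i ∧ ∀ q : Fin k, G.Adj (wk q.castSucc) (wk q.succ)),
      ∏ q : Fin k, ((G.degree (wk q.castSucc) : ℝ))⁻¹ = 1 := by
  intro k
  induction k with
  | zero =>
    intro i
    have : (Finset.univ.filter (fun wk : Fin 1 → Fin n =>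
        wk 0 = i ∧ ∀ q : Fin 0, G.Adj (wk q.castSucc) (wk q.succ)))
        = {fun _ => i} := by
      ext wk
      simp only [Finset.mem_filter, Finset.mem_univ, true_and, Finset.mem_singleton]
      constructor
      · rintro ⟨h0, -⟩
        funext p
        rw [Subsingleton.elim p 0, h0]
      · rintro rfl
        exact ⟨rfl, fun q => q.elim0⟩
    rw [this, Finset.sum_singleton]
    simp
  | succ k ih =>
    intro i
    rw [walk_sum_decomp G k i]
    have : ∀ j ∈ G.neighborFinset i,
        (∑ wk' ∈ Finset.univ.filter (fun wk' : Fin (k + 1) → Fin n =>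
          wk' 0 = j ∧ ∀ q : Fin k, G.Adj (wk' q.castSucc) (wk' q.succ)),
          ∏ q : Fin (k + 1),
            ((G.degree ((Fin.cons i wk' : Fin (k + 2) → Fin n) q.castSucc) : ℝ))⁻¹)
        = ((G.degree i : ℝ))⁻¹ := by
      intro j _
      have := ih j
      calc (∑ wk' ∈ Finset.univ.filter (fun wk' : Fin (k + 1) → Fin n =>
          wk' 0 = j ∧ ∀ q : Fin k, G.Adj (wk' q.castSucc) (wk' q.succ)),
          ∏ q : Fin (k + 1),
            ((G.degree ((Fin.cons i wk' : Fin (k + 2) → Fin n) q.castSucc) : ℝ))⁻¹)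
          = ∑ wk' ∈ Finset.univ.filter (fun wk' : Fin (k + 1) → Fin n =>
            wk' 0 = j ∧ ∀ q : Fin k, G.Adj (wk' q.castSucc) (wk' q.succ)),
            ((G.degree i : ℝ))⁻¹ * ∏ q : Fin k, ((G.degree (wk' q.castSucc) : ℝ))⁻¹ := by
            apply Finset.sum_congr rfl
            intro wk' _
            exact cons_weight G k i wk'
        _ = ((G.degree i : ℝ))⁻¹ := by
            rw [← Finset.mul_sum, ih j, mul_one]
    rw [Finset.sum_congr rfl this]
    rw [Finset.sum_const, SimpleGraph.card_neighborFinset_eq_degree]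
    have hne : (G.degree i : ℝ) ≠ 0 := by
      have := hdeg i
      positivity
    rw [nsmul_eq_mul]
    field_simp

lemma term_prod_split {n d : ℕ} (f : Fin n → Fin d → ℝ) (u : ℕ → Fin d → ℝ)
    (M k m r : ℕ) (hr : r ≤ m) (hm : m ≤ M) (i : Fin n) (wk' : Fin (k + 1) → Fin n)
    (jj' : Fin (m - r) → Fin k) :
    (∏ pp : Fin m, ∑ a : Fin d, u (M - m + (pp : ℕ) + 1) a *
      (f ((Fin.cons i wk' : Fin (k + 2) → Fin n) ((glueIdx r jj' pp).succ)) a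
       - f ((Fin.cons i wk' : Fin (k + 2) → Fin n) ((glueIdx r jj' pp).castSucc)) a))
    = (∏ s ∈ Finset.Icc 1 r, ∑ a : Fin d, u (M - m + s) a * (f (wk' 0) a - f i a))
      * ∏ q : Fin (m - r), ∑ a : Fin d, u (M - (m - r) + (q : ℕ) + 1) a *
          (f (wk' (jj' q).succ) a - f (wk' (jj' q).castSucc) a) := by
  rw [← Finset.prod_filter_mul_prod_filter_not Finset.univ (fun pp : Fin m => (pp : ℕ) < r)]
  congr 1
  · refine Finset.prod_bij' (fun p _ => (p : ℕ) + 1)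
      (fun s hs => (⟨s - 1, by
        simp only [Finset.mem_Icc] at hs; omega⟩ : Fin m)) ?_ ?_ ?_ ?_ ?_
    · intro p hp
      simp only [Finset.mem_filter, Finset.mem_univ, true_and] at hp
      simp only [Finset.mem_Icc]
      omega
    · intro s hs
      simp only [Finset.mem_Icc] at hs
      simp only [Finset.mem_filter, Finset.mem_univ, true_and]
      omega
    · intro p hp
      apply Fin.ext
      simp
    · intro s hs
      simp only [Finset.mem_Icc] at hs
      simp only
      omega
    · intro p hp
      simp only [Finset.mem_filter, Finset.mem_univ, true_and] at hp
      have hz : glueIdx r jj' p = 0 := (glueIdx_eq_zero_iff r jj' p).mpr hp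
      rw [hz]
      have e1 : ((Fin.cons i wk' : Fin (k + 2) → Fin n) ((0 : Fin (k + 1)).succ)) = wk' 0 :=
        Fin.cons_succ (α := fun _ => Fin n) i wk' 0
      have e2 : ((Fin.cons i wk' : Fin (k + 2) → Fin n) ((0 : Fin (k + 1)).castSucc)) = i := by
        rw [Fin.castSucc_zero, Fin.cons_zero]
      rw [e1, e2]
      have e3 : M - m + ((p : ℕ) + 1) = M - m + (p : ℕ) + 1 := by omega
      rw [e3]
  · refine Finset.prod_bij'
      (fun p hp => (⟨(p : ℕ) - r, by
        simp only [Finset.mem_filter, Finset.mem_univ, true_and] at hp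
        have := p.isLt; omega⟩ : Fin (m - r)))
      (fun q _ => (⟨(q : ℕ) + r, by have := q.isLt; omega⟩ : Fin m)) ?_ ?_ ?_ ?_ ?_
    · intro p hp
      exact Finset.mem_univ _
    · intro q hq
      simp only [Finset.mem_filter, Finset.mem_univ, true_and]
      omega
    · intro p hp
      simp only [Finset.mem_filter, Finset.mem_univ, true_and] at hp
      apply Fin.ext
      simp only
      omega
    · intro q hq
      apply Fin.ext
      simp only
      omega
    · intro p hp
      simp only [Finset.mem_filter, Finset.mem_univ, true_and] at hp
      have hge : r ≤ (p : ℕ) := by omega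
      rw [glueIdx_val_ge r jj' p hge]
      have e1 : ((Fin.cons i wk' : Fin (k + 2) → Fin n)
          (((jj' ⟨(p : ℕ) - r, by have := p.isLt; omega⟩).succ : Fin (k + 1)).succ))
          = wk' (jj' ⟨(p : ℕ) - r, by have := p.isLt; omega⟩).succ :=
        Fin.cons_succ (α := fun _ => Fin n) i wk' _
      have e2 : ((Fin.cons i wk' : Fin (k + 2) → Fin n)
          (((jj' ⟨(p : ℕ) - r, by have := p.isLt; omega⟩).succ : Fin (k + 1)).castSucc))
          = wk' (jj' ⟨(p : ℕ) - r, by have := p.isLt; omega⟩).castSucc := by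
        rw [← Fin.succ_castSucc]
        exact Fin.cons_succ (α := fun _ => Fin n) i wk' _
      rw [e1, e2]
      have e3 : M - (m - r) + ((⟨(p : ℕ) - r, by have := p.isLt; omega⟩ : Fin (m - r)) : ℕ) + 1
          = M - m + (p : ℕ) + 1 := by
        simp only
        omega
      rw [e3]

section main

variable {n d : ℕ} (G : SimpleGraph (Fin n)) [DecidableRel G.Adj]
  (f : Fin n → Fin d → ℝ) (u : ℕ → Fin d → ℝ) (M : ℕ)

noncomputable def walksF (k : ℕ) (i : Fin n) : Finset (Fin (k + 1) → Fin n) :=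
  Finset.univ.filter (fun wk => wk 0 = i ∧ ∀ q : Fin k, G.Adj (wk q.castSucc) (wk q.succ))

noncomputable def wwt (k : ℕ) (wk : Fin (k + 1) → Fin n) : ℝ :=
  ∏ q : Fin k, ((G.degree (wk q.castSucc) : ℝ))⁻¹

noncomputable def jfR {m k : ℕ} (jj : Fin m → Fin k) : ℝ :=
  (((∏ v ∈ Finset.univ.image jj,
      (Finset.univ.filter fun pp => jj pp = v).card.factorial : ℕ) : ℝ))⁻¹

noncomputable def innerS (k m : ℕ) (wk : Fin (k + 1) → Fin n) : ℝ :=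
  ∑ jj ∈ Finset.univ.filter (fun jj : Fin m → Fin k => Monotone jj),
    jfR jj * ∏ pp : Fin m, ∑ a : Fin d, u (M - m + (pp : ℕ) + 1) a *
      (f (wk (jj pp).succ) a - f (wk (jj pp).castSucc) a)

noncomputable def RHSval (k m : ℕ) (i : Fin n) : ℝ :=
  ∑ wk ∈ walksF G k i, wwt G k wk * innerS f u M k m wk

lemma jfR_glue {m k r : ℕ} (hr : r ≤ m) (jj' : Fin (m - r) → Fin k) :
    jfR (glueIdx r jj') = ((r.factorial : ℝ))⁻¹ * jfR jj' := by
  unfold jfR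
  rw [jfact_glueIdx r hr jj']
  push_cast
  rw [mul_inv]

lemma innerS_zero (k : ℕ) (wk : Fin (k + 1) → Fin n) : innerS f u M k 0 wk = 1 := by
  unfold innerS
  have h1 : (Finset.univ.filter (fun jj : Fin 0 → Fin k => Monotone jj))
      = Finset.univ := by
    apply Finset.filter_true_of_mem
    intro jj _
    intro a
    exact a.elim0
  rw [h1]
  have h2 : ∀ jj : Fin 0 → Fin k, jfR jj * ∏ pp : Fin 0, ∑ a : Fin d,
      u (M - 0 + (pp : ℕ) + 1) a * (f (wk (jj pp).succ) a - f (wk (jj pp).castSucc) a)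
      = 1 := by
    intro jj
    have himg : Finset.univ.image jj = ∅ := by simp
    unfold jfR
    rw [himg]
    simp
  rw [Finset.sum_congr rfl (fun jj _ => h2 jj), Finset.sum_const, nsmul_eq_mul, mul_one]
  have : Fintype.card (Fin 0 → Fin k) = 1 := by simp
  rw [Finset.card_univ, this]
  norm_num

lemma RHSval_zero (hdeg : ∀ i, 1 ≤ G.degree i) (k : ℕ) (i : Fin n) :
    RHSval G f u M k 0 i = 1 := by
  unfold RHSval
  rw [Finset.sum_congr rfl (fun wk _ => by rw [innerS_zero f u M k wk, mul_one])]
  exact walk_weight_sum G hdeg k i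

lemma RHSval_len_zero (m : ℕ) (hm : 1 ≤ m) (i : Fin n) :
    RHSval G f u M 0 m i = 0 := by
  unfold RHSval
  apply Finset.sum_eq_zero
  intro wk _
  have : innerS f u M 0 m wk = 0 := by
    unfold innerS
    apply Finset.sum_eq_zero
    intro jj hjj
    exact (jj ⟨0, hm⟩).elim0
  rw [this, mul_zero]

lemma RHSval_rec (k m : ℕ) (hm : m ≤ M) (i : Fin n) :
    RHSval G f u M (k + 1) m i
    = ∑ r ∈ Finset.range (m + 1), ((r.factorial : ℝ))⁻¹ *
        ∑ j ∈ G.neighborFinset i, ((G.degree i : ℝ))⁻¹ *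
          (∏ s ∈ Finset.Icc 1 r, ∑ a : Fin d, u (M - m + s) a * (f j a - f i a)) *
          RHSval G f u M k (m - r) j := by
  have lhs_eq : RHSval G f u M (k + 1) m i
      = ∑ j ∈ G.neighborFinset i, ∑ wk' ∈ walksF G k j,
          wwt G (k + 1) (Fin.cons i wk') * innerS f u M (k + 1) m (Fin.cons i wk') :=
    walk_sum_decomp G k i (fun wk => wwt G (k + 1) wk * innerS f u M (k + 1) m wk)
  rw [lhs_eq]
  have common : ∀ j ∈ G.neighborFinset i, ∀ wk' ∈ walksF G k j,
      wwt G (k + 1) (Fin.cons i wk') * innerS f u M (k + 1) m (Fin.cons i wk')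
      = ∑ r ∈ Finset.range (m + 1), ((r.factorial : ℝ))⁻¹ *
          (((G.degree i : ℝ))⁻¹ *
            (∏ s ∈ Finset.Icc 1 r, ∑ a : Fin d, u (M - m + s) a * (f j a - f i a)) *
            (wwt G k wk' * innerS f u M k (m - r) wk')) := by
    intro j hj wk' hwk'
    have h0 : wk' 0 = j := by
      have := (Finset.mem_filter.mp hwk').2
      exact this.1
    have hw : wwt G (k + 1) (Fin.cons i wk') = ((G.degree i : ℝ))⁻¹ * wwt G k wk' :=
      cons_weight G k i wk'
    have hS : innerS f u M (k + 1) m (Fin.cons i wk')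
        = ∑ r ∈ Finset.range (m + 1),
            ∑ jj' ∈ Finset.univ.filter (fun jj' : Fin (m - r) → Fin k => Monotone jj'),
              jfR (glueIdx r jj') * ∏ pp : Fin m, ∑ a : Fin d, u (M - m + (pp : ℕ) + 1) a *
                (f ((Fin.cons i wk' : Fin (k + 2) → Fin n) ((glueIdx r jj' pp).succ)) a
                 - f ((Fin.cons i wk' : Fin (k + 2) → Fin n) ((glueIdx r jj' pp).castSucc)) a) :=
      sum_monotone_decomp (fun jj => jfR jj * ∏ pp : Fin m, ∑ a : Fin d,
        u (M - m + (pp : ℕ) + 1) a *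
          (f ((Fin.cons i wk' : Fin (k + 2) → Fin n) ((jj pp).succ)) a
           - f ((Fin.cons i wk' : Fin (k + 2) → Fin n) ((jj pp).castSucc)) a))
    rw [hw, hS, Finset.mul_sum]
    apply Finset.sum_congr rfl
    intro r hr
    have hr' : r ≤ m := by
      simp only [Finset.mem_range] at hr; omega
    have hterm : ∀ jj' ∈ Finset.univ.filter (fun jj' : Fin (m - r) → Fin k => Monotone jj'),
        jfR (glueIdx r jj') * ∏ pp : Fin m, ∑ a : Fin d, u (M - m + (pp : ℕ) + 1) a *
          (f ((Fin.cons i wk' : Fin (k + 2) → Fin n) ((glueIdx r jj' pp).succ)) a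
           - f ((Fin.cons i wk' : Fin (k + 2) → Fin n) ((glueIdx r jj' pp).castSucc)) a)
        = ((r.factorial : ℝ))⁻¹ *
            (((∏ s ∈ Finset.Icc 1 r, ∑ a : Fin d, u (M - m + s) a * (f j a - f i a))) *
             (jfR jj' * ∏ q : Fin (m - r), ∑ a : Fin d, u (M - (m - r) + (q : ℕ) + 1) a *
                (f (wk' (jj' q).succ) a - f (wk' (jj' q).castSucc) a))) := by
      intro jj' _
      rw [jfR_glue hr' jj', term_prod_split f u M k m r hr' hm i wk' jj', h0]
      ring
    rw [Finset.sum_congr rfl hterm]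
    rw [← Finset.mul_sum, ← Finset.mul_sum]
    have : innerS f u M k (m - r) wk'
        = ∑ jj' ∈ Finset.univ.filter (fun jj' : Fin (m - r) → Fin k => Monotone jj'),
            jfR jj' * ∏ q : Fin (m - r), ∑ a : Fin d, u (M - (m - r) + (q : ℕ) + 1) a *
              (f (wk' (jj' q).succ) a - f (wk' (jj' q).castSucc) a) := rfl
    rw [← this]
    ring
  rw [Finset.sum_congr rfl (fun j hj => Finset.sum_congr rfl (fun wk' hwk' =>
    common j hj wk' hwk'))]
  -- now both sides triple sums; transform RHS
  have rhs_eq : ∀ r ∈ Finset.range (m + 1), ((r.factorial : ℝ))⁻¹ *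
        ∑ j ∈ G.neighborFinset i, ((G.degree i : ℝ))⁻¹ *
          (∏ s ∈ Finset.Icc 1 r, ∑ a : Fin d, u (M - m + s) a * (f j a - f i a)) *
          RHSval G f u M k (m - r) j
      = ∑ j ∈ G.neighborFinset i, ∑ wk' ∈ walksF G k j,
          ((r.factorial : ℝ))⁻¹ *
            (((G.degree i : ℝ))⁻¹ *
              (∏ s ∈ Finset.Icc 1 r, ∑ a : Fin d, u (M - m + s) a * (f j a - f i a)) *
              (wwt G k wk' * innerS f u M k (m - r) wk')) := by
    intro r _
    rw [Finset.mul_sum]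
    apply Finset.sum_congr rfl
    intro j _
    unfold RHSval
    rw [Finset.mul_sum, Finset.mul_sum]
  rw [Finset.sum_congr rfl rhs_eq]
  rw [Finset.sum_comm]
  apply Finset.sum_congr rfl
  intro j _
  rw [Finset.sum_comm]

lemma mulVec_P (P : Matrix (Fin n) (Fin n) ℝ)
    (hP : ∀ i j, P i j = if G.Adj i j then ((G.degree i : ℝ))⁻¹ else 0)
    (v : Fin n → ℝ) (i : Fin n) :
    P.mulVec v i = ∑ j ∈ G.neighborFinset i, ((G.degree i : ℝ))⁻¹ * v j := by
  have h1 : P.mulVec v i = ∑ j : Fin n, P i j * v j := by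
    simp [Matrix.mulVec, dotProduct]
  rw [h1]
  rw [← Finset.sum_subset (Finset.subset_univ (G.neighborFinset i))]
  · apply Finset.sum_congr rfl
    intro j hj
    rw [SimpleGraph.mem_neighborFinset] at hj
    rw [hP, if_pos hj]
  · intro j _ hj
    rw [SimpleGraph.mem_neighborFinset] at hj
    rw [hP, if_neg hj, zero_mul]

lemma mulVec_PC (P : Matrix (Fin n) (Fin n) ℝ)
    (hP : ∀ i j, P i j = if G.Adj i j then ((G.degree i : ℝ))⁻¹ else 0)
    (C : (Fin d → ℝ) → Matrix (Fin n) (Fin n) ℝ)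
    (hC : ∀ v i j, C v i j = if G.Adj i j then ∑ a : Fin d, v a * (f j a - f i a) else 0)
    (m r : ℕ) (v : Fin n → ℝ) (i : Fin n) :
    (Matrix.of fun i j =>
        P i j * ∏ s ∈ Finset.Icc 1 r, C (u (M - m + s)) i j).mulVec v i
    = ∑ j ∈ G.neighborFinset i, ((G.degree i : ℝ))⁻¹ *
        (∏ s ∈ Finset.Icc 1 r, ∑ a : Fin d, u (M - m + s) a * (f j a - f i a)) * v j := by
  have h1 : (Matrix.of fun i j =>
      P i j * ∏ s ∈ Finset.Icc 1 r, C (u (M - m + s)) i j).mulVec v i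
      = ∑ j : Fin n, (P i j * ∏ s ∈ Finset.Icc 1 r, C (u (M - m + s)) i j) * v j := by
    simp [Matrix.mulVec, dotProduct]
  rw [h1]
  rw [← Finset.sum_subset (Finset.subset_univ (G.neighborFinset i))]
  · apply Finset.sum_congr rfl
    intro j hj
    rw [SimpleGraph.mem_neighborFinset] at hj
    rw [hP, if_pos hj]
    congr 2
    apply Finset.prod_congr rfl
    intro s _
    rw [hC, if_pos hj]
  · intro j _ hj
    rw [SimpleGraph.mem_neighborFinset] at hj
    rw [hP, if_neg hj, zero_mul, zero_mul]

lemma mainLemma (hdeg : ∀ i, 1 ≤ G.degree i)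
    (P : Matrix (Fin n) (Fin n) ℝ)
    (hP : ∀ i j, P i j = if G.Adj i j then ((G.degree i : ℝ))⁻¹ else 0)
    (C : (Fin d → ℝ) → Matrix (Fin n) (Fin n) ℝ)
    (hC : ∀ v i j, C v i j = if G.Adj i j then ∑ a : Fin d, v a * (f j a - f i a) else 0)
    (F : ℕ → ℕ → Fin n → ℝ)
    (hF0 : ∀ k, F k 0 = fun _ => 1)
    (hF1 : ∀ m, 1 ≤ m → m ≤ M →
      F 1 m = ((m.factorial : ℝ))⁻¹ •
        (Matrix.of fun i j =>
          P i j * ∏ s ∈ Finset.Icc 1 m, C (u (M - m + s)) i j).mulVec fun _ => 1)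
    (hFrec : ∀ k, 2 ≤ k → ∀ m, 1 ≤ m → m ≤ M →
      F k m = P.mulVec (F (k - 1) m)
        + ∑ r ∈ Finset.Icc 1 m, ((r.factorial : ℝ))⁻¹ •
            (Matrix.of fun i j =>
              P i j * ∏ s ∈ Finset.Icc 1 r, C (u (M - m + s)) i j).mulVec
              (F (k - 1) (m - r))) :
    ∀ k m, m ≤ M → ∀ i, F (k + 1) m i = RHSval G f u M (k + 1) m i := by
  intro k
  induction k with
  | zero =>
    intro m hm i
    rcases Nat.eq_zero_or_pos m with hm0 | hm1
    · subst hm0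
      rw [hF0 1, RHSval_zero G f u M hdeg 1 i]
    · rw [hF1 m hm1 hm]
      rw [Pi.smul_apply, smul_eq_mul, mulVec_PC G f u M P hP C hC m m _ i]
      rw [RHSval_rec G f u M 0 m hm i]
      rw [Finset.sum_eq_single m]
      · rw [Nat.sub_self]
        congr 1
        apply Finset.sum_congr rfl
        intro j _
        rw [RHSval_zero G f u M hdeg 0 j]
      · intro r hr hrm
        simp only [Finset.mem_range] at hr
        have : ∀ j ∈ G.neighborFinset i, ((G.degree i : ℝ))⁻¹ *
            (∏ s ∈ Finset.Icc 1 r, ∑ a : Fin d, u (M - m + s) a * (f j a - f i a)) *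
            RHSval G f u M 0 (m - r) j = 0 := by
          intro j _
          rw [RHSval_len_zero G f u M (m - r) (by omega) j, mul_zero]
        rw [Finset.sum_congr rfl this, Finset.sum_const, smul_zero, mul_zero]
      · intro hmem
        exact absurd (Finset.mem_range.mpr (by omega)) hmem
  | succ k ih =>
    intro m hm i
    rcases Nat.eq_zero_or_pos m with hm0 | hm1
    · subst hm0
      rw [hF0 (k + 2), RHSval_zero G f u M hdeg (k + 2) i]
    · rw [hFrec (k + 2) (by omega) m hm1 hm]
      rw [Pi.add_apply, Finset.sum_apply]
      rw [RHSval_rec G f u M (k + 1) m hm i]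
      have hsplit : Finset.range (m + 1) = insert 0 (Finset.Icc 1 m) := by
        ext x
        simp only [Finset.mem_range, Finset.mem_insert, Finset.mem_Icc]
        omega
      rw [hsplit, Finset.sum_insert (by simp)]
      have h0term : ((Nat.factorial 0 : ℝ))⁻¹ *
          ∑ j ∈ G.neighborFinset i, ((G.degree i : ℝ))⁻¹ *
            (∏ s ∈ Finset.Icc 1 0, ∑ a : Fin d, u (M - m + s) a * (f j a - f i a)) *
            RHSval G f u M (k + 1) (m - 0) j
          = P.mulVec (F (k + 1) m) i := by
        rw [mulVec_P G P hP (F (k + 1) m) i]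
        rw [Nat.factorial_zero, Nat.cast_one, inv_one, one_mul]
        apply Finset.sum_congr rfl
        intro j _
        rw [show Finset.Icc 1 0 = (∅ : Finset ℕ) by simp]
        rw [Finset.prod_empty, mul_one, Nat.sub_zero]
        rw [ih m hm j]
      rw [h0term]
      congr 1
      apply Finset.sum_congr rfl
      intro r hr
      simp only [Finset.mem_Icc] at hr
      rw [Pi.smul_apply, smul_eq_mul]
      simp only [show k + 2 - 1 = k + 1 from rfl]
      rw [mulVec_PC G f u M P hP C hC m r (F (k + 1) (m - r)) i]
      congr 1
      apply Finset.sum_congr rfl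
      intro j _
      rw [ih (m - r) (by omega) j]

end main


open scoped Classical in
/-- **Low-rank recursive algorithm for expected signature features of graph random walks.**
Let `G` be a finite labelled graph on `{1, …, n}` with all degrees `≥ 1`, node attributes
`f : V → ℝ^d`, `P` the random-walk transition matrix and, for `u ∈ ℝ^d`,
`C^u i j = ⟨u, f j - f i⟩` for `i ∼ j` (`0` otherwise). Let `f_{k,m}` satisfy the
recursion `f_{k,0} = 𝟙`, `f_{1,m} = (1/m!) (P ⊙ C^{u_{M-m+1}} ⊙ ⋯ ⊙ C^{u_M}) 𝟙` and, for
`k ≥ 2`, `f_{k,m} = P f_{k-1,m} + Σ_{r=1}^m (1/r!) (P ⊙ C^{u_{M-m+1}} ⊙ ⋯ ⊙ C^{u_{M-m+r}})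
f_{k-1,m-r}` (`⊙` = entrywise product). Then for every vertex `i`, `k ≥ 1`, `1 ≤ m ≤ M`,
`f_{k,m}(i)` equals the sum over all length-`k` walks from `i` of
`(Π_q 1/deg i_{q-1}) Σ_{j ∈ Δ̄_m(k)} (1/j!) Π_{p=1}^m ⟨u_{M-m+p}, f i_{j_p} - f i_{j_p - 1}⟩`,
i.e. the pairing of the rank-one tensor `u_{M-m+1} ⊗ ⋯ ⊗ u_M` with the level-`m`
expected tensor-exponential feature of the length-`k` simple random walk started at `i`.
(Here `Δ̄_m(k)` is the set of non-decreasing multi-indices `1 ≤ j_1 ≤ ⋯ ≤ j_m ≤ k`, and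
`j! = p_1! ⋯ p_s!` where `p_1, …, p_s` are the multiplicities of the distinct values.) -/
theorem graph_low_rank_functional
    {n d : ℕ} (G : SimpleGraph (Fin n)) [DecidableRel G.Adj]
    (hdeg : ∀ i, 1 ≤ G.degree i)
    (f : Fin n → Fin d → ℝ)
    (M : ℕ) (hM : 1 ≤ M) (u : ℕ → Fin d → ℝ)
    (P : Matrix (Fin n) (Fin n) ℝ)
    (hP : ∀ i j, P i j = if G.Adj i j then ((G.degree i : ℝ))⁻¹ else 0)
    (C : (Fin d → ℝ) → Matrix (Fin n) (Fin n) ℝ)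
    (hC : ∀ v i j, C v i j = if G.Adj i j then ∑ a : Fin d, v a * (f j a - f i a) else 0)
    (F : ℕ → ℕ → Fin n → ℝ)
    (hF0 : ∀ k, F k 0 = fun _ => 1)
    (hF1 : ∀ m, 1 ≤ m → m ≤ M →
      F 1 m = ((m.factorial : ℝ))⁻¹ •
        (Matrix.of fun i j =>
          P i j * ∏ s ∈ Finset.Icc 1 m, C (u (M - m + s)) i j).mulVec fun _ => 1)
    (hFrec : ∀ k, 2 ≤ k → ∀ m, 1 ≤ m → m ≤ M →
      F k m = P.mulVec (F (k - 1) m)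
        + ∑ r ∈ Finset.Icc 1 m, ((r.factorial : ℝ))⁻¹ •
            (Matrix.of fun i j =>
              P i j * ∏ s ∈ Finset.Icc 1 r, C (u (M - m + s)) i j).mulVec
              (F (k - 1) (m - r))) :
    ∀ (i : Fin n) (k m : ℕ), 1 ≤ k → 1 ≤ m → m ≤ M →
      F k m i =
        ∑ wk ∈ Finset.univ.filter (fun wk : Fin (k + 1) → Fin n =>
              wk 0 = i ∧ ∀ q : Fin k, G.Adj (wk q.castSucc) (wk q.succ)),
          (∏ q : Fin k, ((G.degree (wk q.castSucc) : ℝ))⁻¹) *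
            ∑ jj ∈ Finset.univ.filter (fun jj : Fin m → Fin k => Monotone jj),
              (((∏ v ∈ Finset.univ.image jj,
                    (Finset.univ.filter fun pp => jj pp = v).card.factorial : ℕ) : ℝ))⁻¹ *
                ∏ pp : Fin m, ∑ a : Fin d, u (M - m + (pp : ℕ) + 1) a *
                  (f (wk (jj pp).succ) a - f (wk (jj pp).castSucc) a) := by
  intro i k m hk hm1 hm
  cases k with
  | zero => omega
  | succ k' =>
    exact mainLemma G f u M hdeg P hP C hC F hF0 hF1 hFrec k' m hm i

end
end

section
/- Let V be a real inner product space, φ : X → V a map, x_1, …, x_L ∈ X a finite sequence, M ≥ 0, and for each 0 ≤ m ≤ M let v_1^m, …, v_m^m ∈ V (defining the rank-one degree-m tensor ℓ_m = v_1^m ⊗ ⋯ ⊗ v_m^m). Define scalars A^{(m)}_{j,l} by the recursion A^{(m)}_{0,l} = 1 for all l ≥ 0, A^{(m)}_{j,0} = 0 for all j ≥ 1, and A^{(m)}_{j,l} = A^{(m)}_{j,l−1} + A^{(m)}_{j−1,l−1}·⟨v_j^m, φ(x_l)⟩ for 1 ≤ j ≤ m and 1 ≤ l ≤ L. Then A^{(m)}_{j,l}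 = Σ_{i ∈ Δ_j(l)} Π_{p=1}^{j} ⟨v_p^m, φ(x_{i_p})⟩ for all 0 ≤ j ≤ m and 0 ≤ l ≤ L; in particular the evaluation of the rank-one, truncation-M linear functional ℓ = (ℓ_0, ℓ_1, …, ℓ_M, 0, …) against the Seq2Tens map satisfies ⟨ℓ, Φ(x_1, …, x_L)⟩ = Σ_{m=0}^M A^{(m)}_{m,L} = Σ_{m=0}^M Σ_{i ∈ Δ_m(L)} Π_{k=1}^m ⟨v_k^m, φ(x_{i_k})⟩, so it can be computed by inner-product evaluations alone. -/
open scoped Classical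

noncomputable def Tsum (g : ℕ → ℕ → ℝ) (j l : ℕ) : ℝ :=
  ∑ i ∈ Finset.univ.filter (fun i : Fin j → Fin l => StrictMono i),
    ∏ p : Fin j, g p (i p)

lemma Tsum_zero (g : ℕ → ℕ → ℝ) (l : ℕ) : Tsum g 0 l = 1 := by
  unfold Tsum
  rw [Finset.filter_true_of_mem (fun i _ => by intro a; exact a.elim0)]
  simp

lemma Tsum_nil (g : ℕ → ℕ → ℝ) (j : ℕ) (hj : 1 ≤ j) : Tsum g j 0 = 0 := by
  haveI : IsEmpty (Fin j → Fin 0) := ⟨fun f => (f ⟨0, hj⟩).elim0⟩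
  unfold Tsum
  simp

lemma Tsum_succ (g : ℕ → ℕ → ℝ) (j l : ℕ) :
    Tsum g (j+1) (l+1) = Tsum g (j+1) l + Tsum g j l * g j l := by
  classical
  unfold Tsum
  rw [← Finset.sum_filter_add_sum_filter_not
      (Finset.univ.filter (fun i : Fin (j+1) → Fin (l+1) => StrictMono i))
      (fun i => i (Fin.last j) = Fin.last l)]
  rw [add_comm]
  congr 1
  · -- values never hit `last l` ↔ functions into `Fin l`
    have hlt : ∀ f : Fin (j+1) → Fin (l+1), StrictMono f → f (Fin.last j) ≠ Fin.last l →
        ∀ p, (f p : ℕ) < l := by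
      intro f hf hne p
      have h1 : f p ≤ f (Fin.last j) := hf.monotone (Fin.le_last p)
      have h2 : f (Fin.last j) < Fin.last l := lt_of_le_of_ne (Fin.le_last _) hne
      have := lt_of_le_of_lt h1 h2
      simpa [Fin.lt_iff_val_lt_val] using this
    refine Finset.sum_bij' (i := fun f hf => fun p => (⟨(f p : ℕ), ?_⟩ : Fin l))
      (j := fun f _ => fun p => (f p).castSucc) ?_ ?_ ?_ ?_ ?_
    · simp only [Finset.mem_filter, Finset.mem_univ, true_and] at hf
      exact hlt f hf.1 hf.2 p
    · intro f hf
      simp only [Finset.mem_filter, Finset.mem_univ, true_and] at hf ⊢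
      intro a b hab
      exact Fin.mk_lt_mk.mpr (Fin.lt_iff_val_lt_val.mp (hf.1 hab))
    · intro f hf
      simp only [Finset.mem_filter, Finset.mem_univ, true_and] at hf ⊢
      refine ⟨?_, (Fin.castSucc_lt_last _).ne⟩
      intro a b hab
      exact Fin.castSucc_lt_castSucc_iff.mpr (hf hab)
    · intro f hf; funext p; exact Fin.ext rfl
    · intro f hf; funext p; exact Fin.ext rfl
    · intro f hf; rfl
  · -- last value is `last l`
    rw [Finset.sum_mul]
    have key : ∀ f : Fin (j+1) → Fin (l+1), StrictMono f → f (Fin.last j) = Fin.last l →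
        ∀ p : Fin j, (f p.castSucc : ℕ) < l := by
      intro f hf hl p
      have : f p.castSucc < f (Fin.last j) := hf (Fin.castSucc_lt_last p)
      rw [hl] at this
      simpa [Fin.lt_iff_val_lt_val] using this
    refine Finset.sum_bij' (i := fun f hf => fun p : Fin j => (⟨(f p.castSucc : ℕ), ?_⟩ : Fin l))
      (j := fun f _ => Fin.snoc (fun p => (f p).castSucc) (Fin.last l)) ?_ ?_ ?_ ?_ ?_
    · simp only [Finset.mem_filter, Finset.mem_univ, true_and] at hf
      exact key f hf.1 hf.2 p
    · intro f hf
      simp only [Finset.mem_filter, Finset.mem_univ, true_and] at hf ⊢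
      intro a b hab
      exact Fin.mk_lt_mk.mpr (Fin.lt_iff_val_lt_val.mp (hf.1 (Fin.castSucc_lt_castSucc_iff.mpr hab)))
    · intro f hf
      simp only [Finset.mem_filter, Finset.mem_univ, true_and] at hf ⊢
      refine ⟨?_, by simp⟩
      intro a b hab
      rcases Fin.eq_castSucc_or_eq_last b with ⟨b', rfl⟩ | rfl
      · obtain ⟨a', rfl⟩ : ∃ a' : Fin j, a'.castSucc = a :=
          Fin.exists_castSucc_eq.mpr (Fin.ne_last_of_lt hab)
        simp only [Fin.snoc_castSucc]
        exact Fin.castSucc_lt_castSucc_iff.mpr (hf (by simpa using hab))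
      · obtain ⟨a', rfl⟩ : ∃ a' : Fin j, a'.castSucc = a :=
          Fin.exists_castSucc_eq.mpr (Fin.ne_last_of_lt hab)
        simp only [Fin.snoc_castSucc, Fin.snoc_last]
        exact Fin.castSucc_lt_last _
    · intro f hf
      funext p
      rcases Fin.eq_castSucc_or_eq_last p with ⟨p', rfl⟩ | rfl
      · simp [Fin.snoc_castSucc]
      · simp only [Fin.snoc_last]
        simp only [Finset.mem_filter, Finset.mem_univ, true_and] at hf
        exact hf.2.symm
    · intro f hf
      funext p
      apply Fin.ext
      simp [Fin.snoc_castSucc]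
    · intro f hf
      rw [Fin.prod_univ_castSucc]
      simp only [Finset.mem_filter, Finset.mem_univ, true_and] at hf
      congr 1
      rw [hf.2]
      simp [Fin.last]

open scoped Classical in
/-- **Recursive evaluation of rank-one functionals of the Seq2Tens map.** Let `V` be a real
inner product space, `φ : X → V`, `x_1, …, x_L` a sequence in `X`, and for `0 ≤ m ≤ M` let
`v_1^m, …, v_m^m ∈ V` (the components of the rank-one degree-`m` tensor
`ℓ_m = v_1^m ⊗ ⋯ ⊗ v_m^m`). If the scalars `A^{(m)}_{j,l}` satisfy
`A^{(m)}_{0,l} = 1`, `A^{(m)}_{j,0} = 0` for `j ≥ 1`, and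
`A^{(m)}_{j,l} = A^{(m)}_{j,l-1} + A^{(m)}_{j-1,l-1} ⟨v_j^m, φ(x_l)⟩`
for `1 ≤ j ≤ m`, `1 ≤ l ≤ L`, then
`A^{(m)}_{j,l} = Σ_{i ∈ Δ_j(l)} Π_{p=1}^j ⟨v_p^m, φ(x_{i_p})⟩`, and in particular the
rank-one truncation-`M` linear functional `ℓ = (ℓ_0, …, ℓ_M, 0, …)` evaluated on the
Seq2Tens map satisfies `⟨ℓ, Φ(x_1, …, x_L)⟩ = Σ_{m=0}^M A^{(m)}_{m,L}
= Σ_{m=0}^M Σ_{i ∈ Δ_m(L)} Π_{k=1}^m ⟨v_k^m, φ(x_{i_k})⟩`, so it can be computed by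
inner-product evaluations alone. (Here `Δ_j(l)` is the set of strictly increasing
multi-indices `1 ≤ i_1 < ⋯ < i_j ≤ l`.) -/
theorem seq2tens_rank_one_recursion
    {V : Type*} [NormedAddCommGroup V] [InnerProductSpace ℝ V]
    {X : Type*} (φ : X → V) (L M : ℕ) (x : ℕ → X)
    (v : ℕ → ℕ → V) (A : ℕ → ℕ → ℕ → ℝ)
    (hA0 : ∀ m l, A m 0 l = 1)
    (hAj0 : ∀ m j, 1 ≤ j → A m j 0 = 0)
    (hArec : ∀ m j l, 1 ≤ j → j ≤ m → 1 ≤ l → l ≤ L →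
      A m j l = A m j (l - 1) + A m (j - 1) (l - 1) * (inner ℝ (v m j) (φ (x l)) : ℝ)) :
    (∀ m ≤ M, ∀ j ≤ m, ∀ l ≤ L,
      A m j l = ∑ i ∈ Finset.univ.filter (fun i : Fin j → Fin l => StrictMono i),
        ∏ p : Fin j, (inner ℝ (v m ((p : ℕ) + 1)) (φ (x ((i p : ℕ) + 1))) : ℝ))
    ∧ ∑ m ∈ Finset.range (M + 1), A m m L
        = ∑ m ∈ Finset.range (M + 1),
            ∑ i ∈ Finset.univ.filter (fun i : Fin m → Fin L => StrictMono i),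
              ∏ p : Fin m, (inner ℝ (v m ((p : ℕ) + 1)) (φ (x ((i p : ℕ) + 1))) : ℝ) := by
  set g : ℕ → ℕ → ℕ → ℝ := fun m a b => (inner ℝ (v m (a + 1)) (φ (x (b + 1))) : ℝ) with hg
  have main : ∀ m, ∀ l ≤ L, ∀ j ≤ m, A m j l = Tsum (g m) j l := by
    intro m l
    induction l with
    | zero =>
      intro _ j hj
      cases j with
      | zero => rw [hA0, Tsum_zero]
      | succ j' => rw [hAj0 m _ (Nat.succ_le_succ (Nat.zero_le _)),
          Tsum_nil _ _ (Nat.succ_le_succ (Nat.zero_le _))]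
    | succ l ih =>
      intro hl j hj
      cases j with
      | zero => rw [hA0, Tsum_zero]
      | succ j' =>
        rw [hArec m (j' + 1) (l + 1) (Nat.succ_le_succ (Nat.zero_le _)) hj
          (Nat.succ_le_succ (Nat.zero_le _)) hl]
        simp only [Nat.add_sub_cancel]
        rw [ih (by omega) (j' + 1) hj, ih (by omega) j' (by omega), Tsum_succ]
  constructor
  · intro m _ j hj l hl
    rw [main m l hl j hj]; rfl
  · refine Finset.sum_congr rfl fun m hm => ?_
    rw [main m L le_rfl m le_rfl]; rfl
end
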